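/- arXiv:1304.7509 — 6 statements merged into one kernel-verified Lean document; each statement's English description precedes it below -/
import Mathlib

section
/- Let κ > 1 be a fixed constant and let Ψ be an n×n complex matrix that is κ-strictly diagonally dominant. Then |det(Ψ)| ≥ (1 − 1/κ)ⁿ · ∏_{i=1}^n |Ψ(i,i)|. -/
open Matrix Polynomial

lemma aux_eig {n : ℕ} (B : Matrix (Fin n) (Fin n) ℂ) {μ : ℂ} (h : μ ∈ B.charpoly.roots) :
    Module.End.HasEigenvalue (Matrix.toLin' B) μ := by
  have hroot : (B.charpoly).IsRoot μ := (Polynomial.mem_roots (B.charpoly_monic.ne_zero)).mp h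
  have hdet : (Matrix.scalar (Fin n) μ - B).det = 0 := by
    have := hroot
    rw [Polynomial.IsRoot, Matrix.charpoly, eval_det, matPolyEquiv_charmatrix] at this
    simpa using this
  obtain ⟨v, hv, hv0⟩ := (Matrix.exists_mulVec_eq_zero_iff).mpr hdet
  refine Module.End.hasEigenvalue_of_hasEigenvector ⟨?_, hv⟩
  rw [Module.End.mem_eigenspace_iff, Matrix.toLin'_apply]
  have : (Matrix.scalar (Fin n) μ).mulVec v - B.mulVec v = 0 := by
    rw [← Matrix.sub_mulVec, hv0]
  have h2 : (Matrix.scalar (Fin n) μ).mulVec v = μ • v := by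
    ext i; simp [Matrix.scalar, Matrix.mulVec_diagonal]
  rw [h2] at this
  exact (sub_eq_zero.mp this).symm

lemma aux_pow_le_prod (a : ℝ) (ha : 0 ≤ a) (s : Multiset ℝ) (h : ∀ x ∈ s, a ≤ x) :
    a ^ Multiset.card s ≤ s.prod := by
  induction s using Multiset.induction_on with
  | empty => simp
  | cons x t ih =>
    simp only [Multiset.prod_cons, Multiset.card_cons, pow_succ]
    have hx : a ≤ x := h x (Multiset.mem_cons_self x t)
    have ht : a ^ Multiset.card t ≤ t.prod := ih fun y hy => h y (Multiset.mem_cons_of_mem hy)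
    calc a ^ Multiset.card t * a ≤ t.prod * x := by
          apply mul_le_mul ht hx ha
          exact le_trans (pow_nonneg ha _) ht
      _ = x * t.prod := mul_comm _ _

/-- If `Ψ` is `κ`-strictly diagonally dominant (`κ > 1`), then
`|det Ψ| ≥ (1 − 1/κ)^n ∏ᵢ |Ψ(i,i)|`. -/
theorem stmt_2 {n : ℕ} (κ : ℝ) (hκ : 1 < κ) (Ψ : Matrix (Fin n) (Fin n) ℂ)
    (hdd : ∀ i : Fin n,
      κ * ∑ j ∈ Finset.univ.erase i, ‖Ψ i j‖ ≤ ‖Ψ i i‖) :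
    (1 - 1 / κ) ^ n * ∏ i : Fin n, ‖Ψ i i‖ ≤ ‖Ψ.det‖ := by
  have hκ0 : (0:ℝ) < κ := lt_trans one_pos hκ
  have hc : (0:ℝ) ≤ 1 - 1/κ := by
    rw [sub_nonneg, div_le_one hκ0]; exact le_of_lt hκ
  by_cases hz : ∃ i, Ψ i i = 0
  · obtain ⟨i, hi⟩ := hz
    have : (∏ i : Fin n, ‖Ψ i i‖) = 0 :=
      Finset.prod_eq_zero (Finset.mem_univ i) (by simp [hi])
    rw [this, mul_zero]
    exact norm_nonneg _
  push_neg at hz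
  -- normalized matrix
  set B : Matrix (Fin n) (Fin n) ℂ := Matrix.diagonal (fun i => (Ψ i i)⁻¹) * Ψ with hB
  have hBij : ∀ i j, B i j = (Ψ i i)⁻¹ * Ψ i j := fun i j => by
    rw [hB, Matrix.diagonal_mul]
  have hBii : ∀ i, B i i = 1 := fun i => by
    rw [hBij, inv_mul_cancel₀ (hz i)]
  -- Gershgorin radius bound for B
  have hrad : ∀ k, ∑ j ∈ Finset.univ.erase k, ‖B k j‖ ≤ 1/κ := by
    intro k
    have hd : (0:ℝ) < ‖Ψ k k‖ := norm_pos_iff.mpr (hz k)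
    have : ∑ j ∈ Finset.univ.erase k, ‖B k j‖
        = (‖Ψ k k‖)⁻¹ * ∑ j ∈ Finset.univ.erase k, ‖Ψ k j‖ := by
      rw [Finset.mul_sum]
      refine Finset.sum_congr rfl fun j _ => ?_
      rw [hBij, norm_mul, norm_inv]
    rw [this]
    rw [inv_mul_le_iff₀ hd]
    rw [mul_one_div, le_div_iff₀ hκ0, mul_comm]
    exact hdd k
  -- every charpoly root of B has abs ≥ 1 - 1/κ
  have hroots : ∀ μ ∈ B.charpoly.roots, 1 - 1/κ ≤ ‖μ‖ := by
    intro μ hμ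
    obtain ⟨k, hk⟩ := eigenvalue_mem_ball (aux_eig B hμ)
    rw [Metric.mem_closedBall, hBii k] at hk
    have h1 : ‖μ - 1‖ ≤ 1/κ := le_trans (by rwa [dist_eq_norm] at hk) (hrad k)
    have h2 : (1:ℝ) - ‖μ‖ ≤ ‖1 - μ‖ := by
      simpa using norm_sub_norm_le (1:ℂ) μ
    rw [← norm_neg, neg_sub] at h1
    linarith
  -- |det B| ≥ (1 - 1/κ)^n
  have hsplit : B.charpoly.Splits := IsAlgClosed.splits _
  have hcard : Multiset.card B.charpoly.roots = n := by
    rw [(Polynomial.splits_iff_card_roots).mp hsplit, Matrix.charpoly_natDegree_eq_dim,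
      Fintype.card_fin]
  have hdetB : ‖B.det‖ = (B.charpoly.roots.map (‖·‖)).prod := by
    rw [Matrix.det_eq_prod_roots_charpoly]
    exact map_multiset_prod (normHom : ℂ →*₀ ℝ) _
  have hBbound : (1 - 1/κ) ^ n ≤ ‖B.det‖ := by
    rw [hdetB]
    have := aux_pow_le_prod (1 - 1/κ) hc (B.charpoly.roots.map (‖·‖)) (by
      intro x hx
      obtain ⟨μ, hμ, rfl⟩ := Multiset.mem_map.mp hx
      exact hroots μ hμ)
    simpa [hcard] using this
  -- relate det B and det Ψ
  have hP : (0:ℝ) < ∏ i : Fin n, ‖Ψ i i‖ :=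
    Finset.prod_pos fun i _ => norm_pos_iff.mpr (hz i)
  have hdetrel : ‖B.det‖ = (∏ i : Fin n, ‖Ψ i i‖)⁻¹ * ‖Ψ.det‖ := by
    rw [hB, Matrix.det_mul, Matrix.det_diagonal, norm_mul]
    congr 1
    rw [norm_prod]
    rw [← Finset.prod_inv_distrib]
    exact Finset.prod_congr rfl fun i _ => norm_inv _
  rw [hdetrel] at hBbound
  calc (1 - 1/κ) ^ n * ∏ i : Fin n, ‖Ψ i i‖
      ≤ ((∏ i : Fin n, ‖Ψ i i‖)⁻¹ * ‖Ψ.det‖) * ∏ i : Fin n, ‖Ψ i i‖ :=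
        mul_le_mul_of_nonneg_right hBbound (le_of_lt hP)
    _ = ‖Ψ.det‖ := by field_simp
end

section
/- Let Ψ be an n×n complex matrix that is strictly diagonally dominant, i.e., |Ψ(i,i)| > ∑_{j≠i} |Ψ(i,j)| for all i = 1,…,n. Then the determinant of Ψ satisfies |det(Ψ)| ≥ ∏_{i=1}^n ( |Ψ(i,i)| − ∑_{j≠i} |Ψ(i,j)| ). -/
open Finset

private lemma sum_erase_succ' {n : ℕ} (f : Fin (n+1) → ℝ) (i : Fin n) :
    ∑ j ∈ univ.erase i.succ, f j = f 0 + ∑ j ∈ univ.erase i, f j.succ := by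
  have h1 : ∑ j ∈ univ.erase i.succ, f j = (∑ j, f j) - f i.succ :=
    Finset.sum_erase_eq_sub (mem_univ _)
  have h2 : ∑ j ∈ univ.erase i, f j.succ = (∑ j : Fin n, f j.succ) - f i.succ :=
    Finset.sum_erase_eq_sub (mem_univ _)
  rw [Fin.sum_univ_succ] at h1
  linarith

private lemma sum_erase_zero' {n : ℕ} (f : Fin (n+1) → ℝ) :
    ∑ j ∈ univ.erase (0 : Fin (n+1)), f j = ∑ j : Fin n, f j.succ := by
  have h1 : ∑ j ∈ univ.erase (0 : Fin (n+1)), f j = (∑ j, f j) - f 0 :=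
    Finset.sum_erase_eq_sub (mem_univ _)
  rw [Fin.sum_univ_succ] at h1
  linarith

private lemma ostrowski_aux : ∀ n : ℕ, ∀ Ψ : Matrix (Fin n) (Fin n) ℂ,
    (∀ i : Fin n,
      ∑ j ∈ Finset.univ.erase i, ‖Ψ i j‖ < ‖Ψ i i‖) →
    ∏ i : Fin n, (‖Ψ i i‖ - ∑ j ∈ Finset.univ.erase i, ‖Ψ i j‖) ≤
      ‖Ψ.det‖ := by
  intro n
  induction n with
  | zero => intro Ψ _; simp [Matrix.det_fin_zero]
  | succ n ih =>
    intro Ψ hdd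
    have h0 : 0 < ‖Ψ 0 0‖ :=
      lt_of_le_of_lt (Finset.sum_nonneg fun j _ => norm_nonneg _) (hdd 0)
    have hΨ00 : Ψ 0 0 ≠ 0 := by
      intro h; rw [h] at h0; simp at h0
    set c : Fin n → ℂ := fun i => Ψ i.succ 0 / Ψ 0 0 with hc
    set B : Matrix (Fin n) (Fin n) ℂ :=
      Matrix.of fun i j => Ψ i.succ j.succ - c i * Ψ 0 j.succ with hB
    set Ψ' : Matrix (Fin (n+1)) (Fin (n+1)) ℂ :=
      Matrix.of fun i j =>
        Fin.cases (Ψ 0 j) (fun k => Ψ k.succ j - c k * Ψ 0 j) i with hΨ'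
    have hdet1 : Ψ.det = Ψ'.det := by
      apply Matrix.det_eq_of_forall_row_eq_smul_add_const
        (fun i => Fin.cases 0 c i) 0 rfl
      intro i j
      induction i using Fin.cases with
      | zero => simp [hΨ']
      | succ k => simp [hΨ']
    have hcol : ∀ k : Fin n, Ψ' k.succ 0 = 0 := by
      intro k
      show Ψ k.succ 0 - c k * Ψ 0 0 = 0
      rw [hc]
      field_simp
      simp
    have hdet2 : Ψ'.det = Ψ 0 0 * B.det := by
      rw [Matrix.det_succ_column_zero]
      rw [Finset.sum_eq_single (0 : Fin (n+1))]
      · have hsub : Ψ'.submatrix (Fin.succAbove 0) Fin.succ = B := by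
          ext i j
          simp [Matrix.submatrix, hΨ', hB]
        rw [hsub]
        simp [hΨ']
      · intro b _ hb
        obtain ⟨k, rfl⟩ : ∃ k : Fin n, b = k.succ := by
          induction b using Fin.cases with
          | zero => exact absurd rfl hb
          | succ k => exact ⟨k, rfl⟩
        rw [hcol k]; ring
      · intro h; exact absurd (mem_univ _) h
    -- the key margin inequality
    have hS : ∑ j : Fin n, ‖Ψ 0 j.succ‖ < ‖Ψ 0 0‖ := by
      have := hdd 0
      rwa [sum_erase_zero' (fun j => ‖Ψ 0 j‖)] at this
    have hmargin : ∀ i : Fin n,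
        ‖Ψ i.succ i.succ‖
            - ∑ j ∈ univ.erase i.succ, ‖Ψ i.succ j‖
          ≤ ‖B i i‖ - ∑ j ∈ univ.erase i, ‖B i j‖ := by
      intro i
      have h1 : ‖Ψ i.succ i.succ‖ - ‖c i * Ψ 0 i.succ‖
          ≤ ‖B i i‖ := norm_sub_norm_le _ _
      have h2 : ∑ j ∈ univ.erase i, ‖B i j‖
          ≤ ∑ j ∈ univ.erase i, ‖Ψ i.succ j.succ‖
            + ∑ j ∈ univ.erase i, ‖c i * Ψ 0 j.succ‖ := by
        rw [← Finset.sum_add_distrib]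
        refine Finset.sum_le_sum fun j _ => ?_
        exact norm_sub_le _ _
      have h3 : ‖c i * Ψ 0 i.succ‖
            + ∑ j ∈ univ.erase i, ‖c i * Ψ 0 j.succ‖
          = ‖c i‖ * ∑ j : Fin n, ‖Ψ 0 j.succ‖ := by
        rw [Finset.add_sum_erase _ (fun j => ‖c i * Ψ 0 j.succ‖) (mem_univ i), Finset.mul_sum]
        simp [norm_mul]
      have h4 : ‖c i‖ * ∑ j : Fin n, ‖Ψ 0 j.succ‖
          ≤ ‖Ψ i.succ 0‖ := by
        have hci : ‖c i‖ * ‖Ψ 0 0‖ = ‖Ψ i.succ 0‖ := by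
          rw [hc]
          simp only [norm_div]
          field_simp
        calc ‖c i‖ * ∑ j : Fin n, ‖Ψ 0 j.succ‖
            ≤ ‖c i‖ * ‖Ψ 0 0‖ :=
              mul_le_mul_of_nonneg_left hS.le (norm_nonneg _)
          _ = ‖Ψ i.succ 0‖ := hci
      have h5 : ∑ j ∈ univ.erase i.succ, ‖Ψ i.succ j‖
          = ‖Ψ i.succ 0‖
            + ∑ j ∈ univ.erase i, ‖Ψ i.succ j.succ‖ :=
        sum_erase_succ' (fun j => ‖Ψ i.succ j‖) i
      linarith
    have hBdd : ∀ i : Fin n,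
        ∑ j ∈ univ.erase i, ‖B i j‖ < ‖B i i‖ := by
      intro i
      have := hmargin i
      have := hdd i.succ
      linarith
    have hih := ih B hBdd
    have hmpos : ∀ i : Fin (n+1),
        0 ≤ ‖Ψ i i‖ - ∑ j ∈ univ.erase i, ‖Ψ i j‖ := by
      intro i; linarith [hdd i]
    calc ∏ i : Fin (n+1),
          (‖Ψ i i‖ - ∑ j ∈ univ.erase i, ‖Ψ i j‖)
        = (‖Ψ 0 0‖ - ∑ j ∈ univ.erase 0, ‖Ψ 0 j‖)
            * ∏ i : Fin n, (‖Ψ i.succ i.succ‖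
              - ∑ j ∈ univ.erase i.succ, ‖Ψ i.succ j‖) := by
          rw [Fin.prod_univ_succ]
      _ ≤ ‖Ψ 0 0‖
            * ∏ i : Fin n, (‖B i i‖
              - ∑ j ∈ univ.erase i, ‖B i j‖) := by
          apply mul_le_mul
          · have : 0 ≤ ∑ j ∈ univ.erase (0 : Fin (n+1)), ‖Ψ 0 j‖ :=
              Finset.sum_nonneg fun j _ => norm_nonneg _
            linarith
          · exact Finset.prod_le_prod (fun i _ => hmpos i.succ) (fun i _ => hmargin i)
          · exact Finset.prod_nonneg fun i _ => hmpos i.succ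
          · exact norm_nonneg _
      _ ≤ ‖Ψ 0 0‖ * ‖B.det‖ :=
          mul_le_mul_of_nonneg_left hih (norm_nonneg _)
      _ = ‖Ψ.det‖ := by rw [hdet1, hdet2, norm_mul]

/-- Ostrowski's bound: if `Ψ` is strictly diagonally dominant, then
`|det Ψ| ≥ ∏ᵢ (|Ψ(i,i)| − ∑_{j≠i} |Ψ(i,j)|)`. -/
theorem stmt_3 {n : ℕ} (Ψ : Matrix (Fin n) (Fin n) ℂ)
    (hdd : ∀ i : Fin n,
      ∑ j ∈ Finset.univ.erase i, ‖Ψ i j‖ < ‖Ψ i i‖) :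
    ∏ i : Fin n, (‖Ψ i i‖ - ∑ j ∈ Finset.univ.erase i, ‖Ψ i j‖) ≤
      ‖Ψ.det‖ := ostrowski_aux n Ψ hdd
end

section
/- Let A ∈ ℂ^{L×L} be Hermitian positive semidefinite and let D be the L×L diagonal matrix with positive real diagonal entries σ₁²,…,σ_L² (viewed as a complex matrix). Define for α > 0 the function C_WZ(α) = log₂( det(A + (1+α)D) / det(αD) ), which is a positive real number since A + (1+α)D is Hermitian positive definite. Then C_WZ is continuous and strictly decreasing on (0,∞), C_WZ(α) → +∞ as α → 0⁺, and C_WZ(α) → 0 as α → ∞; consequently, for every C > 0 there exists a unique α > 0 with C_WZ(α) = C. -/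
open Real Filter Set Matrix
open scoped ComplexOrder


lemma aux_analysis {L : ℕ} (hL : 0 < L) (μ : Fin L → ℝ) (hμ : ∀ i, 0 < μ i)
    (f : ℝ → ℝ) (hf : ∀ α ∈ Set.Ioi (0:ℝ), f α = Real.logb 2 (∏ i, (1 + μ i / α))) :
    (∀ α ∈ Set.Ioi (0 : ℝ), 0 < f α) ∧
      ContinuousOn f (Set.Ioi 0) ∧
      StrictAntiOn f (Set.Ioi 0) ∧
      Filter.Tendsto f (nhdsWithin 0 (Set.Ioi 0)) Filter.atTop ∧
      Filter.Tendsto f Filter.atTop (nhds 0) ∧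
      ∀ C : ℝ, 0 < C → ∃! α : ℝ, 0 < α ∧ f α = C := by
  set g : ℝ → ℝ := fun α => ∏ i, (1 + μ i / α) with hgdef
  have i0 : Fin L := ⟨0, hL⟩
  have hg1 : ∀ α ∈ Set.Ioi (0:ℝ), 1 < g α := by
    intro α hα
    have hne : (Finset.univ : Finset (Fin L)).Nonempty := ⟨⟨0, hL⟩, Finset.mem_univ _⟩
    have h := Finset.prod_lt_prod_of_nonempty (f := fun _ : Fin L => (1:ℝ))
      (g := fun i => 1 + μ i / α) (fun i _ => one_pos)
      (fun i _ => by have := div_pos (hμ i) (mem_Ioi.mp hα); linarith) hne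
    simpa using h
  have hpos : ∀ α ∈ Set.Ioi (0:ℝ), 0 < f α := by
    intro α hα
    rw [hf α hα]
    exact Real.logb_pos one_lt_two (hg1 α hα)
  have hgcont : ContinuousOn g (Set.Ioi 0) := by
    apply continuousOn_finset_prod
    intro i _
    exact continuousOn_const.add (continuousOn_const.div continuousOn_id
      (fun x hx => ne_of_gt (mem_Ioi.mp hx)))
  have hcont : ContinuousOn f (Set.Ioi 0) := by
    refine ContinuousOn.congr ?_ hf
    have h := (hgcont.log (fun x hx => by linarith [hg1 x hx])).div_const (Real.log 2)
    simpa [Real.logb] using h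
  have hanti : StrictAntiOn f (Set.Ioi 0) := by
    intro a ha b hb hab
    rw [hf a ha, hf b hb]
    refine Real.logb_lt_logb one_lt_two ?_ ?_
    · linarith [hg1 b hb]
    · refine Finset.prod_lt_prod_of_nonempty (fun i _ => ?_) (fun i _ => ?_)
        ⟨⟨0, hL⟩, Finset.mem_univ _⟩
      · have := div_pos (hμ i) (mem_Ioi.mp hb); linarith
      · have := div_lt_div_of_pos_left (hμ i) (mem_Ioi.mp ha) hab; linarith
  have hgtop : Filter.Tendsto g (nhdsWithin 0 (Set.Ioi 0)) Filter.atTop := by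
    have h1 : Filter.Tendsto (fun α : ℝ => 1 + μ i0 / α) (nhdsWithin 0 (Set.Ioi 0))
        Filter.atTop := by
      refine tendsto_atTop_add_const_left _ 1 ?_
      have : Filter.Tendsto (fun α : ℝ => μ i0 * α⁻¹) (nhdsWithin 0 (Set.Ioi 0))
          Filter.atTop := tendsto_inv_nhdsGT_zero.const_mul_atTop (hμ i0)
      exact Filter.Tendsto.congr (fun α => (div_eq_mul_inv _ _).symm) this
    refine tendsto_atTop_mono' _ ?_ h1
    filter_upwards [self_mem_nhdsWithin] with α hα
    show 1 + μ i0 / α ≤ ∏ i : Fin L, (1 + μ i / α)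
    have h := Finset.prod_le_prod (s := Finset.univ) (f := fun i : Fin L => if i = i0 then 1 + μ i / α else 1)
      (g := fun i => 1 + μ i / α)
      (fun i _ => by
        split_ifs
        · have := le_of_lt (div_pos (hμ i) (mem_Ioi.mp hα)); linarith
        · norm_num)
      (fun i _ => by
        split_ifs
        · exact le_rfl
        · have := le_of_lt (div_pos (hμ i) (mem_Ioi.mp hα)); linarith)
    simpa using h
  have htop : Filter.Tendsto f (nhdsWithin 0 (Set.Ioi 0)) Filter.atTop := by
    refine Filter.Tendsto.congr' ?_ (((Real.tendsto_logb_atTop one_lt_two).comp hgtop))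
    filter_upwards [self_mem_nhdsWithin] with α hα
    exact (hf α hα).symm
  have hgone : Filter.Tendsto g Filter.atTop (nhds 1) := by
    have h : Filter.Tendsto (fun α : ℝ => ∏ i : Fin L, (1 + μ i / α)) Filter.atTop
        (nhds (∏ _i : Fin L, (1:ℝ))) := by
      refine tendsto_finset_prod _ (fun i _ => ?_)
      have : Filter.Tendsto (fun α : ℝ => μ i / α) Filter.atTop (nhds 0) :=
        Filter.Tendsto.div_atTop tendsto_const_nhds tendsto_id
      simpa using tendsto_const_nhds.add this
    simpa using h
  have hzero : Filter.Tendsto f Filter.atTop (nhds 0) := by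
    have h : Filter.Tendsto (fun α => Real.logb 2 (g α)) Filter.atTop
        (nhds (Real.logb 2 1)) := by
      have hc : ContinuousAt (Real.logb 2) 1 := by
        unfold Real.logb
        exact (Real.continuousAt_log one_ne_zero).div_const _
      exact hc.tendsto.comp hgone
    rw [Real.logb_one] at h
    refine Filter.Tendsto.congr' ?_ h
    filter_upwards [eventually_gt_atTop 0] with α hα
    exact (hf α hα).symm
  refine ⟨hpos, hcont, hanti, htop, hzero, ?_⟩
  intro C hC
  obtain ⟨a, ha, haC⟩ : ∃ a : ℝ, 0 < a ∧ C < f a := by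
    have := htop.eventually (eventually_gt_atTop C)
    rcases (this.and self_mem_nhdsWithin).exists with ⟨a, hCa, ha⟩
    exact ⟨a, ha, hCa⟩
  obtain ⟨b', hb'⟩ := (Filter.eventually_atTop).mp (hzero.eventually (gt_mem_nhds hC))
  set b := max b' a with hbdef
  have hab : a ≤ b := le_max_right _ _
  have hb0 : 0 < b := lt_of_lt_of_le ha hab
  have hfb : f b < C := hb' b (le_max_left _ _)
  have hsub : Set.Icc a b ⊆ Set.Ioi 0 := fun x hx => lt_of_lt_of_le ha hx.1
  have := intermediate_value_Icc' hab (hcont.mono hsub)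
  obtain ⟨x, hx, hfx⟩ := this ⟨le_of_lt hfb, le_of_lt haC⟩
  have hx0 : 0 < x := lt_of_lt_of_le ha hx.1
  refine ⟨x, ⟨hx0, hfx⟩, ?_⟩
  rintro y ⟨hy0, hfy⟩
  exact hanti.injOn (mem_Ioi.mpr hy0) (mem_Ioi.mpr hx0) (hfy.trans hfx.symm)


lemma aux_matrix {L : ℕ} (A : Matrix (Fin L) (Fin L) ℂ) (hA : A.PosSemidef)
    (σ : Fin L → ℝ) (hσ : ∀ i, 0 < σ i) :
    ∃ μ : Fin L → ℝ, (∀ i, 0 < μ i) ∧ ∀ α : ℝ, 0 < α →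
      (A + (1 + α) • (Matrix.diagonal fun i => (σ i : ℂ))).det.re /
        ((α • (Matrix.diagonal fun i => (σ i : ℂ))).det.re) = ∏ i, (1 + μ i / α) := by
  set D : Matrix (Fin L) (Fin L) ℂ := Matrix.diagonal fun i => (σ i : ℂ) with hDdef
  have hD : D.PosDef := Matrix.PosDef.diagonal fun i => Complex.zero_lt_real.mpr (hσ i)
  have hAD : (A + D).PosDef := Matrix.PosDef.posSemidef_add hA hD
  set s : Fin L → ℝ := fun i => Real.sqrt (σ i) with hsdef
  have hs : ∀ i, 0 < s i := fun i => Real.sqrt_pos.mpr (hσ i)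
  set F : Matrix (Fin L) (Fin L) ℂ := Matrix.diagonal fun i => (s i : ℂ) with hFdef
  set G : Matrix (Fin L) (Fin L) ℂ := Matrix.diagonal fun i => ((s i)⁻¹ : ℂ) with hGdef
  have hsne : ∀ i, ((s i : ℂ)) ≠ 0 := fun i => Complex.ofReal_ne_zero.mpr (hs i).ne'
  have hFG : F * G = 1 := by
    rw [hFdef, hGdef, Matrix.diagonal_mul_diagonal]
    have h : ∀ i, (s i : ℂ) * ((s i : ℂ))⁻¹ = 1 := fun i => mul_inv_cancel₀ (hsne i)
    simp only [h]
    exact Matrix.diagonal_one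
  have hGF : G * F = 1 := by
    rw [hGdef, hFdef, Matrix.diagonal_mul_diagonal]
    have h : ∀ i, ((s i : ℂ))⁻¹ * (s i : ℂ) = 1 := fun i => inv_mul_cancel₀ (hsne i)
    simp only [h]
    exact Matrix.diagonal_one
  have hFF : F * F = D := by
    rw [hFdef, hDdef, Matrix.diagonal_mul_diagonal]
    have h : ∀ i, (s i : ℂ) * (s i : ℂ) = ((σ i : ℝ) : ℂ) := fun i => by
      rw [← Complex.ofReal_mul, Real.mul_self_sqrt (hσ i).le]
    simp only [h]
  have hGH : Gᴴ = G := by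
    rw [hGdef, Matrix.diagonal_conjTranspose]
    exact congrArg Matrix.diagonal (funext fun i => by
      simp [Complex.conj_ofReal])
  set N : Matrix (Fin L) (Fin L) ℂ := G * (A + D) * G with hNdef
  have hNpsd : N.PosSemidef := by
    have h := hAD.posSemidef.conjTranspose_mul_mul_same G
    rwa [hGH] at h
  have hNH : N.IsHermitian := hNpsd.1
  set μ : Fin L → ℝ := hNH.eigenvalues with hμdef
  have hdetF : F.det = ∏ i, (s i : ℂ) := by rw [hFdef, Matrix.det_diagonal]
  have hdetFne : F.det ≠ 0 := by
    rw [hdetF]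
    exact Finset.prod_ne_zero_iff.mpr fun i _ => Complex.ofReal_ne_zero.mpr (hs i).ne'
  have hdetGne : G.det ≠ 0 := by
    intro h
    have := Matrix.det_mul F G
    rw [hFG, Matrix.det_one, h, mul_zero] at this
    exact one_ne_zero this
  have hdetADne : (A + D).det ≠ 0 := hAD.det_pos.ne'
  have hdetNne : N.det ≠ 0 := by
    rw [hNdef, Matrix.det_mul, Matrix.det_mul]
    exact mul_ne_zero (mul_ne_zero hdetGne hdetADne) hdetGne
  have hdetN : N.det = ∏ i, (μ i : ℂ) := hNH.det_eq_prod_eigenvalues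
  have hμpos : ∀ i, 0 < μ i := by
    intro i
    have hnn : 0 ≤ μ i := hNpsd.eigenvalues_nonneg i
    rcases hnn.lt_or_eq with h | h
    · exact h
    · exfalso
      apply hdetNne
      rw [hdetN]
      exact Finset.prod_eq_zero (Finset.mem_univ i) (by rw [← h]; norm_num)
  refine ⟨μ, hμpos, fun α hα => ?_⟩
  have hsmul : ∀ (r : ℝ) (M : Matrix (Fin L) (Fin L) ℂ), r • M = (r : ℂ) • M := by
    intro r M
    ext i j
    simp [Complex.real_smul]
  -- key matrix identity
  have hFNF : F * N * F = A + D := by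
    rw [hNdef]
    calc F * (G * (A + D) * G) * F = (F * G) * (A + D) * (G * F) := by
          noncomm_ring
      _ = A + D := by rw [hFG, hGF, one_mul, mul_one]
  have hkey : A + (1 + α) • D = F * (N + (α : ℂ) • 1) * F := by
    rw [mul_add, add_mul, hFNF, mul_smul_comm, smul_mul_assoc, mul_one, hFF,
      hsmul (1 + α) D]
    push_cast
    rw [add_smul, one_smul]
    abel
  -- spectral theorem for N
  set V : Matrix (Fin L) (Fin L) ℂ := (hNH.eigenvectorUnitary : Matrix (Fin L) (Fin L) ℂ)
    with hVdef
  have hVs : V * star V = 1 := Matrix.mem_unitaryGroup_iff.mp hNH.eigenvectorUnitary.2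
  have hspec : N + (α : ℂ) • 1 = V * Matrix.diagonal (fun i => ((μ i : ℂ) + α)) * star V := by
    have h1 : Matrix.diagonal (fun i : Fin L => ((μ i : ℂ) + α)) =
        Matrix.diagonal (RCLike.ofReal ∘ μ) + (α : ℂ) • 1 := by
      rw [Matrix.smul_one_eq_diagonal, Matrix.diagonal_add]
      rfl
    rw [h1, mul_add, add_mul, mul_smul_comm, smul_mul_assoc,
      mul_one, hVs]
    congr 1
    nth_rewrite 1 [hNH.spectral_theorem]
    rw [Unitary.conjStarAlgAut_apply]
  have hdet2 : (N + (α : ℂ) • 1).det = ∏ i, ((μ i : ℂ) + α) := by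
    rw [hspec, Matrix.det_mul_right_comm, hVs, one_mul, Matrix.det_diagonal]
  -- determinant of numerator
  have hnum : (A + (1 + α) • D).det = (((∏ i, σ i) * ∏ i, (μ i + α) : ℝ) : ℂ) := by
    rw [hkey, Matrix.det_mul, Matrix.det_mul, hdetF, hdet2]
    have hss : (∏ i, (s i : ℂ)) * (∏ i, (s i : ℂ)) = ((∏ i, σ i : ℝ) : ℂ) := by
      rw [← Finset.prod_mul_distrib]
      push_cast
      exact Finset.prod_congr rfl fun i _ => by
        rw [← Complex.ofReal_mul, Real.mul_self_sqrt (hσ i).le]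
    calc (∏ i, (s i : ℂ)) * (∏ i, ((μ i : ℂ) + α)) * ∏ i, (s i : ℂ)
        = ((∏ i, (s i : ℂ)) * ∏ i, (s i : ℂ)) * ∏ i, ((μ i : ℂ) + α) := by ring
      _ = ((∏ i, σ i : ℝ) : ℂ) * ∏ i, ((μ i : ℂ) + α) := by rw [hss]
      _ = (((∏ i, σ i) * ∏ i, (μ i + α) : ℝ) : ℂ) := by push_cast; ring
  -- determinant of denominator
  have hden : (α • D).det = ((α ^ L * ∏ i, σ i : ℝ) : ℂ) := by
    rw [hsmul α D, Matrix.det_smul, hDdef, Matrix.det_diagonal, Fintype.card_fin]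
    push_cast
    ring
  rw [hnum, hden, Complex.ofReal_re, Complex.ofReal_re]
  have hP : 0 < ∏ i, σ i := Finset.prod_pos fun i _ => hσ i
  have hαL : (0:ℝ) < α ^ L := pow_pos hα L
  have hprod : ∏ i, (1 + μ i / α) = (∏ i, (μ i + α)) / α ^ L := by
    have h : ∀ i, 1 + μ i / α = (μ i + α) / α := fun i => by
      field_simp
      ring
    simp only [h]
    rw [Finset.prod_div_distrib, Finset.prod_const, Finset.card_univ, Fintype.card_fin]
  rw [hprod]
  field_simp

/-- Properties of the Wyner-Ziv backhaul rate function
`C_WZ(α) = log₂(det(A + (1+α)D) / det(αD))` with quantization noise levels `qᵢ = ασᵢ²`: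
it is positive, continuous and strictly decreasing on `(0,∞)`, tends to `+∞` as `α → 0⁺`
and to `0` as `α → ∞`; consequently for every `C > 0` there is a unique `α > 0` with
`C_WZ(α) = C`. -/
theorem stmt_5 {L : ℕ} (hL : 0 < L) (A : Matrix (Fin L) (Fin L) ℂ) (hA : A.PosSemidef)
    (σ : Fin L → ℝ) (hσ : ∀ i, 0 < σ i) :
    let D : Matrix (Fin L) (Fin L) ℂ := Matrix.diagonal fun i => (σ i : ℂ)
    let CWZ : ℝ → ℝ := fun α =>
      Real.logb 2 ((A + (1 + α) • D).det.re / ((α • D).det.re))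
    (∀ α ∈ Set.Ioi (0 : ℝ), 0 < CWZ α) ∧
      ContinuousOn CWZ (Set.Ioi 0) ∧
      StrictAntiOn CWZ (Set.Ioi 0) ∧
      Filter.Tendsto CWZ (nhdsWithin 0 (Set.Ioi 0)) Filter.atTop ∧
      Filter.Tendsto CWZ Filter.atTop (nhds 0) ∧
      ∀ C : ℝ, 0 < C → ∃! α : ℝ, 0 < α ∧ CWZ α = C := by
  intro D CWZ
  obtain ⟨μ, hμ, hratio⟩ := aux_matrix A hA σ hσ
  refine aux_analysis hL μ hμ CWZ ?_
  intro α hα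
  exact congrArg (Real.logb 2) (hratio α (Set.mem_Ioi.mp hα))
end

section
/- (Constant-gap optimality of VMAC-WZ, determinant form.) Let L ≥ 1, let A ∈ ℂ^{L×L} be Hermitian positive semidefinite (representing the received signal covariance H K_X H^H), and let D be the L×L diagonal matrix with positive real diagonal entries σ₁²,…,σ_L² (the background noise covariance). For every C > 0 there exists α > 0 (corresponding to quantization noise levels qᵢ = ασᵢ² proportional to the background noise levels) such that: (i) log₂( det(A + (1+α)D) / det(αD) ) ≤ C, and (ii) min{ log₂( det(A + D) / det(D) ), C } − log₂( det(A + (1+α)D) / det((1+α)D) ) < L. -/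
open scoped ComplexOrder

open Matrix in
lemma det_re_eq_aux {L : ℕ} (A : Matrix (Fin L) (Fin L) ℂ) (hA : A.PosSemidef)
    (σ : Fin L → ℝ) (hσ : ∀ i, 0 < σ i) :
    ∃ μ : Fin L → ℝ, (∀ i, 0 ≤ μ i) ∧ ∀ t : ℝ,
      (A + t • Matrix.diagonal fun i => (σ i : ℂ)).det.re
        = (∏ i, σ i) * ∏ i, (μ i + t) := by
  set s : Fin L → ℝ := fun i => Real.sqrt (σ i) with hs_def
  have hs : ∀ i, 0 < s i := fun i => Real.sqrt_pos.mpr (hσ i)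
  set S : Matrix (Fin L) (Fin L) ℂ := Matrix.diagonal fun i => (s i : ℂ) with hS_def
  set T : Matrix (Fin L) (Fin L) ℂ := Matrix.diagonal fun i => ((s i)⁻¹ : ℂ) with hT_def
  have hST : S * T = 1 := by
    have h : (fun i => (s i : ℂ) * ((s i)⁻¹ : ℂ)) = fun _ => (1 : ℂ) :=
      funext fun i => mul_inv_cancel₀ (by exact_mod_cast (hs i).ne')
    rw [hS_def, hT_def, diagonal_mul_diagonal, h, Matrix.diagonal_one]
  have hTS : T * S = 1 := by
    have h : (fun i => ((s i)⁻¹ : ℂ) * (s i : ℂ)) = fun _ => (1 : ℂ) :=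
      funext fun i => inv_mul_cancel₀ (by exact_mod_cast (hs i).ne')
    rw [hS_def, hT_def, diagonal_mul_diagonal, h, Matrix.diagonal_one]
  have hTH : Tᴴ = T := by
    rw [hT_def, diagonal_conjTranspose]
    have h : (star fun i => ((s i)⁻¹ : ℂ)) = fun i => ((s i)⁻¹ : ℂ) := by
      funext i; simp
    rw [h]
  set B := T * A * T with hB_def
  have hB : B.PosSemidef := by
    have h := hA.conjTranspose_mul_mul_same T
    rwa [hTH] at h
  have hA' : S * B * S = A := by
    rw [hB_def]
    simp only [Matrix.mul_assoc]
    rw [hTS, Matrix.mul_one, ← Matrix.mul_assoc, hST, Matrix.one_mul]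
  have hSS : S * S = Matrix.diagonal fun i => (σ i : ℂ) := by
    have h : (fun i => (s i : ℂ) * (s i : ℂ)) = fun i => (σ i : ℂ) := by
      funext i
      rw [← Complex.ofReal_mul, Real.mul_self_sqrt (hσ i).le]
    rw [hS_def, diagonal_mul_diagonal, h]
  have hH := hB.isHermitian
  refine ⟨hH.eigenvalues, fun i => hB.eigenvalues_nonneg i, fun t => ?_⟩
  have hU : (hH.eigenvectorUnitary : Matrix (Fin L) (Fin L) ℂ)
      * star (hH.eigenvectorUnitary : Matrix (Fin L) (Fin L) ℂ) = 1 :=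
    Matrix.mem_unitaryGroup_iff.mp hH.eigenvectorUnitary.2
  have h1 : A + t • (Matrix.diagonal fun i => (σ i : ℂ)) = S * (B + (t : ℂ) • 1) * S := by
    rw [Matrix.mul_add, Matrix.add_mul, hA']
    congr 1
    rw [Matrix.mul_smul, Matrix.smul_mul, Matrix.mul_one, hSS]
    ext i j
    simp [Matrix.smul_apply, Complex.real_smul]
  have h2 : B + (t : ℂ) • 1
      = (hH.eigenvectorUnitary : Matrix (Fin L) (Fin L) ℂ)
        * (Matrix.diagonal (RCLike.ofReal ∘ hH.eigenvalues) + (t : ℂ) • 1)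
        * star (hH.eigenvectorUnitary : Matrix (Fin L) (Fin L) ℂ) := by
    rw [Matrix.mul_add, Matrix.add_mul, ← Unitary.conjStarAlgAut_apply (S := ℂ), ← hH.spectral_theorem]
    congr 1
    rw [Matrix.mul_smul, Matrix.smul_mul, Matrix.mul_one, hU]
  have h3 : Matrix.diagonal (RCLike.ofReal ∘ hH.eigenvalues) + (t : ℂ) • (1 : Matrix (Fin L) (Fin L) ℂ)
      = Matrix.diagonal fun i => ((hH.eigenvalues i + t : ℝ) : ℂ) := by
    rw [← Matrix.diagonal_one, ← Matrix.diagonal_smul, Matrix.diagonal_add]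
    funext i
    push_cast
    simp [RCLike.ofReal]
  have hdet2 : (B + (t : ℂ) • 1).det = ∏ i, ((hH.eigenvalues i + t : ℝ) : ℂ) := by
    rw [h2, Matrix.det_mul_right_comm, Matrix.mul_assoc, ← Matrix.mul_assoc, hU,
      Matrix.one_mul, h3, Matrix.det_diagonal]
  rw [h1, Matrix.det_mul, Matrix.det_mul, hdet2, hS_def, Matrix.det_diagonal]
  rw [← Complex.ofReal_prod, ← Complex.ofReal_prod, ← Complex.ofReal_mul, ← Complex.ofReal_mul,
    Complex.ofReal_re]
  have h4 : (∏ i, s i) * ∏ i, s i = ∏ i, σ i := by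
    rw [← Finset.prod_mul_distrib]
    exact Finset.prod_congr rfl fun i _ => Real.mul_self_sqrt (hσ i).le
  rw [mul_right_comm, h4]

/-- Constant-gap optimality of VMAC-WZ (determinant form): for every sum backhaul capacity
`C > 0` there is `α > 0` (quantization noise `qᵢ = ασᵢ²`) such that the Wyner-Ziv backhaul
requirement `log₂(det(A+(1+α)D)/det(αD))` is at most `C` and the gap between the cut-set
bound `min{log₂(det(A+D)/det D), C}` and the achievable sum rate
`log₂(det(A+(1+α)D)/det((1+α)D))` is less than `L` bits. -/
theorem stmt_10 {L : ℕ} (hL : 1 ≤ L) (A : Matrix (Fin L) (Fin L) ℂ) (hA : A.PosSemidef)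
    (σ : Fin L → ℝ) (hσ : ∀ i, 0 < σ i) (C : ℝ) (hC : 0 < C) :
    let D : Matrix (Fin L) (Fin L) ℂ := Matrix.diagonal fun i => (σ i : ℂ)
    ∃ α : ℝ, 0 < α ∧
      Real.logb 2 ((A + (1 + α) • D).det.re / ((α • D).det.re)) ≤ C ∧
      min (Real.logb 2 ((A + D).det.re / D.det.re)) C -
          Real.logb 2 ((A + (1 + α) • D).det.re / (((1 + α) • D).det.re)) <
        L := by
  intro D
  have hD : D = Matrix.diagonal fun i => (σ i : ℂ) := rfl
  obtain ⟨μ, hμ, hdet⟩ := det_re_eq_aux A hA σ hσ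
  set P : ℝ := ∏ i, σ i with hP_def
  have hP : 0 < P := Finset.prod_pos fun i _ => hσ i
  set Q : ℝ → ℝ := fun t => ∏ i, (μ i + t) with hQ_def
  have hQpos : ∀ t : ℝ, 0 < t → 0 < Q t := fun t ht =>
    Finset.prod_pos fun i _ => by have := hμ i; linarith
  have hQmono : ∀ t t' : ℝ, 0 < t → t < t' → Q t < Q t' := by
    intro t t' ht htt'
    refine Finset.prod_lt_prod_of_nonempty (fun i _ => by have := hμ i; linarith)
      (fun i _ => by linarith) ?_
    haveI : Nonempty (Fin L) := Fin.pos_iff_nonempty.mp hL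
    exact Finset.univ_nonempty
  have e2 : ∀ t : ℝ, (A + t • D).det.re = P * Q t := fun t => hdet t
  have e1 : ∀ r : ℝ, (r • D).det.re = r ^ L * P := by
    intro r
    have h : r • D = Matrix.diagonal fun i => ((r * σ i : ℝ) : ℂ) := by
      rw [hD]; ext i j
      by_cases hij : i = j
      · subst hij
        simp [Matrix.smul_apply, Matrix.diagonal_apply_eq, Complex.real_smul,
          Complex.ofReal_mul]
      · simp [Matrix.smul_apply, Matrix.diagonal_apply_ne _ hij]
    rw [h, Matrix.det_diagonal, ← Complex.ofReal_prod, Complex.ofReal_re,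
      Finset.prod_mul_distrib, Finset.prod_const, Finset.card_univ, Fintype.card_fin]
  have eD : D.det.re = P := by
    have := e1 1
    rwa [one_smul, one_pow, one_mul] at this
  have eAD : (A + D).det.re = P * Q 1 := by
    have := e2 1
    rwa [one_smul] at this
  -- the backhaul function
  set g : ℝ → ℝ := fun a => Real.logb 2 (Q (1 + a) / a ^ L) with hg_def
  have hback : ∀ a : ℝ, 0 < a →
      Real.logb 2 ((A + (1 + a) • D).det.re / ((a • D).det.re)) = g a := by
    intro a ha
    rw [e2, e1, hg_def]
    congr 1
    rw [mul_comm (a ^ L) P, mul_div_mul_left _ _ hP.ne']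
  have hrate : ∀ a : ℝ, 0 < a →
      Real.logb 2 ((A + (1 + a) • D).det.re / (((1 + a) • D).det.re))
        = Real.logb 2 (Q (1 + a) / (1 + a) ^ L) := by
    intro a ha
    rw [e2, e1]
    congr 1
    rw [mul_comm ((1 + a) ^ L) P, mul_div_mul_left _ _ hP.ne']
  have hcut : Real.logb 2 ((A + D).det.re / D.det.re) = Real.logb 2 (Q 1) := by
    rw [eAD, eD, mul_comm, mul_div_assoc, div_self hP.ne', mul_one]
  have hLpos : (0:ℝ) < L := by exact_mod_cast hL
  -- split the backhaul log, for a ≥ 1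
  have hgsplit : ∀ a : ℝ, 0 < a →
      g a = Real.logb 2 (Q (1 + a)) - L * Real.logb 2 a := by
    intro a ha
    show Real.logb 2 (Q (1 + a) / a ^ L) = _
    rw [Real.logb_div (hQpos _ (by linarith)).ne' (pow_pos ha L).ne', Real.logb_pow]
  by_cases hcase : g 1 ≤ C
  · -- α = 1
    refine ⟨1, one_pos, ?_, ?_⟩
    · rw [hback 1 one_pos]; exact hcase
    · rw [hrate 1 one_pos, hcut]
      have h21 : Q 1 < Q (1 + 1) := hQmono 1 (1+1) one_pos (by norm_num)
      have hr : Real.logb 2 (Q (1 + 1) / (1 + 1) ^ L)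
          = Real.logb 2 (Q (1 + 1)) - L := by
        rw [Real.logb_div (hQpos _ (by norm_num)).ne' (by positivity), Real.logb_pow,
          show (1:ℝ) + 1 = 2 by norm_num, Real.logb_self_eq_one one_lt_two]
        ring
      have hmin : min (Real.logb 2 (Q 1)) C ≤ Real.logb 2 (Q 1) := min_le_left _ _
      have hlt : Real.logb 2 (Q 1) < Real.logb 2 (Q (1 + 1)) :=
        Real.logb_lt_logb one_lt_two (hQpos 1 one_pos) h21
      rw [hr]
      linarith
  · push_neg at hcase
    -- choose M with g M ≤ C
    set c : ℝ := (2:ℝ) ^ (C / L : ℝ) with hc_def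
    have hc1 : 1 < c := by
      rw [hc_def]
      have : (0:ℝ) < C / L := div_pos hC hLpos
      calc (1:ℝ) = (2:ℝ) ^ (0:ℝ) := by rw [Real.rpow_zero]
        _ < (2:ℝ) ^ (C / L : ℝ) := Real.rpow_lt_rpow_left_iff one_lt_two |>.mpr this
    set K : ℝ := ∑ i, μ i with hK_def
    have hKi : ∀ i, μ i ≤ K := fun i =>
      Finset.single_le_sum (fun j _ => hμ j) (Finset.mem_univ i)
    set M : ℝ := max 2 ((K + 1) / (c - 1)) with hM_def
    have hM2 : (2:ℝ) ≤ M := le_max_left _ _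
    have hM0 : (0:ℝ) < M := by linarith
    have hgM : g M ≤ C := by
      have hx : 0 < Q (1 + M) / M ^ L := div_pos (hQpos _ (by linarith)) (pow_pos hM0 L)
      rw [hg_def, Real.logb_le_iff_le_rpow one_lt_two hx]
      have hprod : Q (1 + M) / M ^ L = ∏ i, ((μ i + (1 + M)) / M) := by
        rw [hQ_def, Finset.prod_div_distrib, Finset.prod_const, Finset.card_univ,
          Fintype.card_fin]
      have hfac : ∀ i, (μ i + (1 + M)) / M ≤ c := by
        intro i
        rw [div_le_iff₀ hM0]
        have h1 : (K + 1) / (c - 1) ≤ M := le_max_right _ _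
        have h2 : K + 1 ≤ (c - 1) * M := by
          have := (div_le_iff₀ (by linarith : (0:ℝ) < c - 1)).mp h1
          nlinarith
        have := hKi i
        nlinarith
      have hcL : (∏ _i : Fin L, c) = (2:ℝ) ^ (C:ℝ) := by
        rw [Finset.prod_const, Finset.card_univ, Fintype.card_fin, hc_def,
          ← Real.rpow_natCast ((2:ℝ) ^ (C / L : ℝ)) L, ← Real.rpow_mul (by norm_num),
          div_mul_cancel₀]
        exact_mod_cast hLpos.ne'
      calc Q (1 + M) / M ^ L = ∏ i, ((μ i + (1 + M)) / M) := hprod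
        _ ≤ ∏ _i : Fin L, c := Finset.prod_le_prod
            (fun i _ => div_nonneg (by have := hμ i; linarith) hM0.le) (fun i _ => hfac i)
        _ = (2:ℝ) ^ (C:ℝ) := hcL
    -- continuity of g on [1, M]
    have hcont : ContinuousOn g (Set.Icc 1 M) := by
      intro a ha
      have ha1 : (1:ℝ) ≤ a := ha.1
      have hx : Q (1 + a) / a ^ L ≠ 0 :=
        (div_pos (hQpos _ (by linarith)) (pow_pos (by linarith) L)).ne'
      have hinner : ContinuousAt (fun a : ℝ => Q (1 + a) / a ^ L) a := by
        apply ContinuousAt.div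
        · exact (Continuous.continuousAt (by rw [hQ_def]; fun_prop))
        · exact (continuous_pow L).continuousAt.comp continuousAt_id
        · exact (pow_pos (by linarith : (0:ℝ) < a) L).ne'
      have hca := ContinuousAt.comp (f := fun a : ℝ => Q (1 + a) / a ^ L)
        (Real.continuousAt_logb (b := 2) hx) hinner
      have hca' : ContinuousAt (fun a : ℝ => Real.logb 2 (Q (1 + a) / a ^ L)) a := by
        exact hca
      exact hca'.continuousWithinAt
    have hmem : C ∈ Set.Icc (g M) (g 1) := ⟨hgM, hcase.le⟩
    have h1M : (1:ℝ) ≤ M := by linarith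
    obtain ⟨α, hαmem, hgα⟩ := intermediate_value_Icc' h1M hcont hmem
    have hα1 : 1 < α := by
      rcases lt_or_eq_of_le hαmem.1 with h | h
      · exact h
      · exfalso; rw [← h] at hgα; rw [hgα] at hcase; exact lt_irrefl C hcase
    have hα0 : 0 < α := by linarith
    refine ⟨α, hα0, ?_, ?_⟩
    · rw [hback α hα0, hgα]
    · rw [hrate α hα0]
      have hgap : g α - Real.logb 2 (Q (1 + α) / (1 + α) ^ L)
          = (L : ℝ) * (Real.logb 2 (1 + α) - Real.logb 2 α) := by
        rw [hgsplit α hα0,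
          Real.logb_div (hQpos _ (by linarith)).ne' (pow_pos (by linarith) L).ne',
          Real.logb_pow]
        ring
      have hlog1 : Real.logb 2 (1 + α) - Real.logb 2 α < 1 := by
        have h2α : Real.logb 2 (1 + α) < Real.logb 2 (2 * α) :=
          Real.logb_lt_logb one_lt_two (by linarith) (by linarith)
        rw [Real.logb_mul (by norm_num) hα0.ne', Real.logb_self_eq_one one_lt_two] at h2α
        linarith
      have : g α - Real.logb 2 (Q (1 + α) / (1 + α) ^ L) < L := by
        rw [hgap]
        nlinarith
      rw [hgα] at this
      have hminC : min (Real.logb 2 ((A + D).det.re / D.det.re)) C ≤ C := min_le_right _ _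
      linarith
end

section
/- (Constant-gap optimality of VMAC-SU under diagonal dominance, determinant form.) Let L ≥ 1 and κ > 1, let A ∈ ℂ^{L×L} be Hermitian positive semidefinite (representing the received signal covariance H K_X H^H), and let D be the L×L diagonal matrix with positive real diagonal entries σ₁²,…,σ_L² (the background noise covariance). Suppose that A + D is κ-strictly diagonally dominant. Then for every C > 0 there exists α > 0 (corresponding to quantization noise levels qᵢ = ασᵢ²) such that: (i) ∑_{i=1}^L log₂( (A(i,i) + (1+α)σᵢ²) / (α σᵢ²) ) ≤ C, and (ii) min{ log₂( det(A + D) / det(D) ), C } − log₂( det(A + (1+α)D) / det((1+α)D) ) < L·( 1 + log₂( κ/(κ−1) ) ), where A(i,i) denotes the i-th diagonal entry of A (a nonnegative real since A is positive semidefinite). -/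
open scoped ComplexOrder
open scoped Matrix

lemma aux_prod_abs (c : ℝ) (hc : 0 ≤ c) (s : Multiset ℂ)
    (h : ∀ z ∈ s, c ≤ ‖z‖) :
    c ^ (Multiset.card s) ≤ ‖s.prod‖ := by
  induction s using Multiset.induction_on with
  | empty => simp
  | cons a s ih =>
    rw [Multiset.prod_cons, norm_mul, Multiset.card_cons, pow_succ, mul_comm]
    exact mul_le_mul (h a (Multiset.mem_cons_self a s))
      (ih fun z hz => h z (Multiset.mem_cons_of_mem hz))
      (pow_nonneg hc _) (norm_nonneg _)

lemma det_lower {n : ℕ} (κ : ℝ) (hκ : 1 < κ) (M : Matrix (Fin n) (Fin n) ℂ)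
    (d : Fin n → ℝ) (hd : ∀ i, 0 < d i) (hdiag : ∀ i, M i i = (d i : ℂ))
    (hrow : ∀ i, κ * ∑ j ∈ Finset.univ.erase i, ‖(M i j)‖ ≤ d i) :
    (1 - 1/κ) ^ n * ∏ i, d i ≤ ‖M.det‖ := by
  have hκ0 : (0:ℝ) < κ := lt_trans one_pos hκ
  set N : Matrix (Fin n) (Fin n) ℂ := Matrix.diagonal (fun i => ((d i)⁻¹ : ℂ)) * M with hN
  have hNapp : ∀ i j, N i j = ((d i)⁻¹ : ℂ) * M i j := by
    intro i j; rw [hN, Matrix.diagonal_mul]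
  -- every root of the charpoly of N has absolute value ≥ 1 - 1/κ
  have hroot : ∀ μ ∈ N.charpoly.roots, (1 - 1/κ) ≤ ‖μ‖ := by
    intro μ hμ
    have hisroot : N.charpoly.IsRoot μ :=
      (Polynomial.mem_roots (N.charpoly_monic.ne_zero)).mp hμ
    have heval : (Matrix.diagonal (fun _ : Fin n => μ) - N).det = 0 := by
      have h0 : Polynomial.eval μ N.charpoly = 0 := hisroot
      rw [Matrix.charpoly, ← Polynomial.coe_evalRingHom, RingHom.map_det] at h0
      rw [← h0]
      congr 1
      ext i j
      by_cases hij : i = j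
      · subst hij
        simp [Matrix.charmatrix_apply_eq, Matrix.diagonal_apply_eq, Matrix.sub_apply]
      · simp [Matrix.charmatrix_apply_ne _ _ _ hij, Matrix.diagonal_apply_ne _ hij,
          Matrix.sub_apply]
    obtain ⟨v, hv0, hv⟩ := (Matrix.exists_mulVec_eq_zero_iff).mpr heval
    have heig : Module.End.HasEigenvalue (Matrix.toLin' N) μ := by
      apply Module.End.hasEigenvalue_of_hasEigenvector (x := v)
      refine ⟨Module.End.mem_eigenspace_iff.mpr ?_, hv0⟩
      rw [Matrix.toLin'_apply]
      rw [Matrix.sub_mulVec, sub_eq_zero] at hv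
      rw [← hv]
      have : Matrix.diagonal (fun _ : Fin n => μ) = μ • (1 : Matrix (Fin n) (Fin n) ℂ) := by
        rw [Matrix.smul_one_eq_diagonal]
      rw [this, Matrix.smul_mulVec, Matrix.one_mulVec]
    obtain ⟨k, hk⟩ := eigenvalue_mem_ball heig
    rw [Metric.mem_closedBall] at hk
    have hNkk : N k k = 1 := by
      rw [hNapp, hdiag]
      norm_cast
      exact inv_mul_cancel₀ (hd k).ne'
    have hsum : ∑ j ∈ Finset.univ.erase k, ‖N k j‖ ≤ 1/κ := by
      have heq : ∑ j ∈ Finset.univ.erase k, ‖N k j‖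
          = (d k)⁻¹ * ∑ j ∈ Finset.univ.erase k, ‖(M k j)‖ := by
        rw [Finset.mul_sum]
        refine Finset.sum_congr rfl fun j _ => ?_
        rw [hNapp, ← Complex.ofReal_inv, norm_mul, Complex.norm_real, Real.norm_eq_abs,
          abs_of_pos (inv_pos.mpr (hd k))]
      rw [heq, inv_mul_le_iff₀ (hd k), mul_one_div, le_div_iff₀ hκ0, mul_comm]
      exact hrow k
    have hdist : ‖μ - (1:ℂ)‖ ≤ 1/κ := by
      rw [hNkk, dist_eq_norm] at hk
      exact le_trans hk hsum
    have h1 : ‖(1:ℂ)‖ - ‖(1:ℂ) - μ‖ ≤ ‖(1:ℂ) - ((1:ℂ) - μ)‖ := norm_sub_norm_le _ _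
    simp only [norm_one, sub_sub_cancel] at h1
    have : ‖(1:ℂ) - μ‖ ≤ 1/κ := by rwa [← norm_neg, neg_sub]
    calc 1 - 1/κ ≤ 1 - ‖(1:ℂ) - μ‖ := by linarith
    _ ≤ ‖μ‖ := h1
    _ = ‖μ‖ := rfl
  -- product over the roots
  have hdet : N.det = N.charpoly.roots.prod := Matrix.det_eq_prod_roots_charpoly N
  have hcard : Multiset.card N.charpoly.roots = n := by
    have hsplit : N.charpoly.Splits := IsAlgClosed.splits _
    rw [(Polynomial.splits_iff_card_roots).mp hsplit, Matrix.charpoly_natDegree_eq_dim,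
      Fintype.card_fin]
  have hlow : (1 - 1/κ) ^ n ≤ ‖N.det‖ := by
    have := aux_prod_abs _ (by rw [sub_nonneg, div_le_one hκ0]; exact hκ.le) _ hroot
    rw [hcard] at this
    rw [hdet]
    exact this
  have hNdet : ‖N.det‖ = (∏ i, (d i)⁻¹) * ‖M.det‖ := by
    rw [hN, Matrix.det_mul, Matrix.det_diagonal, norm_mul]
    congr 1
    have hcast : (∏ i, ((d i : ℂ))⁻¹) = ((∏ i, (d i)⁻¹ : ℝ) : ℂ) := by push_cast; ring
    rw [hcast, Complex.norm_real, Real.norm_eq_abs,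
      abs_of_pos (Finset.prod_pos fun i _ => inv_pos.mpr (hd i))]
  rw [hNdet] at hlow
  have hprodpos : (0:ℝ) < ∏ i, d i := Finset.prod_pos fun i _ => hd i
  calc (1 - 1/κ) ^ n * ∏ i, d i
      ≤ ((∏ i, (d i)⁻¹) * ‖M.det‖) * ∏ i, d i :=
        mul_le_mul_of_nonneg_right hlow hprodpos.le
    _ = ‖M.det‖ := by
        rw [Finset.prod_inv_distrib]
        field_simp

lemma det_upper {n : ℕ} (B : Matrix (Fin n) (Fin n) ℂ) (hB : B.PosSemidef)
    (d : Fin n → ℝ) (hd : ∀ i, 0 < d i) (hdiag : ∀ i, B i i = (d i : ℂ)) :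
    B.det.re ≤ ∏ i, d i := by
  rcases Nat.eq_zero_or_pos n with hn | hn
  · subst hn
    simp [Matrix.det_fin_zero]
  set s : Fin n → ℝ := fun i => Real.sqrt (d i)⁻¹ with hs
  have hs_pos : ∀ i, 0 < s i := fun i => Real.sqrt_pos.mpr (inv_pos.mpr (hd i))
  have hss : ∀ i, s i * s i = (d i)⁻¹ := fun i =>
    Real.mul_self_sqrt (inv_pos.mpr (hd i)).le
  set E : Matrix (Fin n) (Fin n) ℂ := Matrix.diagonal (fun i => (s i : ℂ)) with hE
  have hEH : Eᴴ = E := by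
    rw [hE, Matrix.diagonal_conjTranspose]
    exact congrArg Matrix.diagonal (funext fun i => Complex.conj_ofReal (s i))
  set T : Matrix (Fin n) (Fin n) ℂ := E * B * E with hT
  have hTpsd : T.PosSemidef := by
    have := hB.mul_mul_conjTranspose_same E
    rwa [hEH] at this
  have hTherm := hTpsd.1
  have hTdiag : ∀ i, T i i = 1 := by
    intro i
    rw [hT, Matrix.mul_diagonal, Matrix.diagonal_mul, hdiag]
    have : (s i : ℂ) * (d i : ℂ) * (s i : ℂ) = ((s i * d i * s i : ℝ) : ℂ) := by push_cast; ring
    rw [this]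
    have : s i * d i * s i = 1 := by
      calc s i * d i * s i = (s i * s i) * d i := by ring
      _ = (d i)⁻¹ * d i := by rw [hss i]
      _ = 1 := inv_mul_cancel₀ (hd i).ne'
    rw [this, Complex.ofReal_one]
  -- eigenvalues of T
  set lam : Fin n → ℝ := hTherm.eigenvalues with hlam
  have hlam_nonneg : ∀ i, 0 ≤ lam i := fun i => hTpsd.eigenvalues_nonneg i
  -- trace identity
  have htraceT : T.trace = (n : ℂ) := by
    rw [Matrix.trace]
    simp only [Matrix.diag_apply, hTdiag]
    simp
  have htrace_eig : ∑ i, (lam i : ℂ) = (n : ℂ) := by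
    rw [← htraceT, hTherm.trace_eq_sum_eigenvalues]
    rfl
  have hsum_lam : ∑ i, lam i = (n : ℝ) := by
    have : ((∑ i, lam i : ℝ) : ℂ) = ((n : ℝ) : ℂ) := by push_cast; exact_mod_cast htrace_eig
    exact_mod_cast this
  -- AM-GM
  have hprod_le_one : (∏ i, lam i) ≤ 1 := by
    have hn' : (n : ℝ) ≠ 0 := Nat.cast_ne_zero.mpr hn.ne'
    have hgm := Real.geom_mean_le_arith_mean_weighted Finset.univ (fun _ => 1 / n) lam
      (fun i _ => by positivity) (by simp [Finset.card_univ]; field_simp)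
      (fun i _ => hlam_nonneg i)
    have hrhs : ∑ i, (1 / (n:ℝ)) * lam i = 1 := by
      rw [← Finset.mul_sum, hsum_lam]
      field_simp
    rw [hrhs] at hgm
    have hprodpow : ∏ i, lam i ^ (1 / (n:ℝ)) = (∏ i, lam i) ^ (1 / (n:ℝ)) := by
      rw [← Real.finset_prod_rpow _ _ (fun i _ => hlam_nonneg i)]
    rw [hprodpow] at hgm
    have hx : (0:ℝ) ≤ ∏ i, lam i := Finset.prod_nonneg fun i _ => hlam_nonneg i
    have : ((∏ i, lam i) ^ (1 / (n:ℝ))) ^ (n:ℕ) ≤ 1 := by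
      calc ((∏ i, lam i) ^ (1 / (n:ℝ))) ^ (n:ℕ) ≤ 1 ^ (n:ℕ) :=
        pow_le_pow_left₀ (Real.rpow_nonneg hx _) hgm n
      _ = 1 := one_pow n
    rwa [← Real.rpow_natCast ((∏ i, lam i) ^ (1 / (n:ℝ))) n, ← Real.rpow_mul hx,
      one_div_mul_cancel hn', Real.rpow_one] at this
  -- determinant relations
  have hdetT : T.det = ((∏ i, lam i : ℝ) : ℂ) := by
    rw [hTherm.det_eq_prod_eigenvalues]
    push_cast
    rfl
  have hdetE2 : (∏ i, (s i : ℂ)) * (∏ i, (s i : ℂ)) = ((∏ i, (d i)⁻¹ : ℝ) : ℂ) := by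
    rw [← Finset.prod_mul_distrib]
    push_cast
    exact Finset.prod_congr rfl fun i _ => by exact_mod_cast congrArg (Complex.ofReal) (hss i)
  have hdetT2 : T.det = ((∏ i, (d i)⁻¹ : ℝ) : ℂ) * B.det := by
    rw [hT, Matrix.det_mul, Matrix.det_mul, hE, Matrix.det_diagonal, ← hdetE2]
    ring
  have hBdet : B.det = ((∏ i, d i : ℝ) : ℂ) * T.det := by
    rw [hdetT2]
    have hcancel : ((∏ i, d i : ℝ) : ℂ) * ((∏ i, (d i)⁻¹ : ℝ) : ℂ) = 1 := by
      rw [← Complex.ofReal_mul, Finset.prod_inv_distrib]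
      rw [mul_inv_cancel₀ (ne_of_gt (Finset.prod_pos fun i _ => hd i))]
      simp
    rw [← mul_assoc, hcancel, one_mul]
  rw [hBdet, hdetT, ← Complex.ofReal_mul, Complex.ofReal_re]
  calc (∏ i, d i) * ∏ i, lam i ≤ (∏ i, d i) * 1 :=
    mul_le_mul_of_nonneg_left hprod_le_one (Finset.prod_pos fun i _ => hd i).le
  _ = ∏ i, d i := mul_one _

set_option maxHeartbeats 1000000 in
/-- Constant-gap optimality of VMAC-SU under diagonal dominance (determinant form): if
`A + D` is `κ`-strictly diagonally dominant, then for every sum backhaul capacity `C > 0`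
there is `α > 0` (quantization noise `qᵢ = ασᵢ²`) such that the single-user-compression
backhaul requirement `∑ᵢ log₂((A(i,i)+(1+α)σᵢ²)/(ασᵢ²))` is at most `C` and the gap between
the cut-set bound `min{log₂(det(A+D)/det D), C}` and the achievable sum rate
`log₂(det(A+(1+α)D)/det((1+α)D))` is less than `L(1 + log₂(κ/(κ−1)))` bits. -/
theorem stmt_12 {L : ℕ} (hL : 1 ≤ L) (κ : ℝ) (hκ : 1 < κ)
    (A : Matrix (Fin L) (Fin L) ℂ) (hA : A.PosSemidef)
    (σ : Fin L → ℝ) (hσ : ∀ i, 0 < σ i)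
    (hdd : ∀ i : Fin L,
      κ * ∑ j ∈ Finset.univ.erase i,
          ‖(A + Matrix.diagonal fun k => (σ k : ℂ)) i j‖ ≤
        ‖(A + Matrix.diagonal fun k => (σ k : ℂ)) i i‖)
    (C : ℝ) (hC : 0 < C) :
    let D : Matrix (Fin L) (Fin L) ℂ := Matrix.diagonal fun i => (σ i : ℂ)
    ∃ α : ℝ, 0 < α ∧
      (∑ i : Fin L, Real.logb 2 (((A i i).re + (1 + α) * σ i) / (α * σ i))) ≤ C ∧
      min (Real.logb 2 ((A + D).det.re / D.det.re)) C -
          Real.logb 2 ((A + (1 + α) • D).det.re / (((1 + α) • D).det.re)) <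
        L * (1 + Real.logb 2 (κ / (κ - 1))) := by
  intro D
  have hD_def : D = Matrix.diagonal fun i => (σ i : ℂ) := rfl
  have hb2 : (1:ℝ) < 2 := one_lt_two
  have hLpos : (0:ℝ) < L := by exact_mod_cast hL
  have hκ0 : (0:ℝ) < κ := lt_trans one_pos hκ
  have hκκ : (0:ℝ) < 1 - 1/κ := by
    rw [sub_pos, div_lt_one hκ0]; exact hκ
  have hκeq : 1 - 1/κ = (κ / (κ - 1))⁻¹ := by
    field_simp
  have hlogκ : Real.logb 2 (1 - 1/κ) = - Real.logb 2 (κ / (κ - 1)) := by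
    rw [hκeq, Real.logb_inv]
  -- diagonal entries of A are real and nonnegative
  have hAii : ∀ i, A i i = ((A i i).re : ℂ) := by
    intro i
    have h1 : Aᴴ i i = A i i := congrFun (congrFun hA.1 i) i
    rw [Matrix.conjTranspose_apply] at h1
    exact (Complex.conj_eq_iff_re.mp h1).symm
  have hAre : ∀ i, 0 ≤ (A i i).re := by
    intro i
    have h0 := hA.dotProduct_mulVec_nonneg (Pi.single i 1)
    have hdot : dotProduct (star (Pi.single i 1 : Fin L → ℂ))
        (A *ᵥ (Pi.single i 1 : Fin L → ℂ)) = A i i := by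
      rw [Matrix.mulVec_single]
      simp [dotProduct, Pi.single_apply, apply_ite (star : ℂ → ℂ), star_one, star_zero,
        ite_mul, one_mul, zero_mul, Finset.sum_ite_eq]
    rw [hdot] at h0
    exact (Complex.le_def.mp h0).1
  set d : Fin L → ℝ := fun i => (A i i).re + σ i with hd_def
  have hd : ∀ i, 0 < d i := fun i => add_pos_of_nonneg_of_pos (hAre i) (hσ i)
  -- facts about B = A + D
  have hBdiag : ∀ i, (A + D) i i = (d i : ℂ) := by
    intro i
    rw [hD_def, Matrix.add_apply, Matrix.diagonal_apply_eq, hAii]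
    push_cast [hd_def]
    rfl
  have hBoff : ∀ i j, i ≠ j → (A + D) i j = A i j := by
    intro i j hij
    rw [hD_def, Matrix.add_apply, Matrix.diagonal_apply_ne _ hij, add_zero]
  have hdd' : ∀ i, κ * ∑ j ∈ Finset.univ.erase i, ‖((A + D) i j)‖ ≤ d i := by
    intro i
    have := hdd i
    rwa [hBdiag i, Complex.norm_real, Real.norm_eq_abs, abs_of_pos (hd i)] at this
  -- positive definiteness
  have hDpd : D.PosDef := Matrix.PosDef.diagonal fun i => Complex.zero_lt_real.mpr (hσ i)
  have hBpd : (A + D).PosDef := Matrix.PosDef.posSemidef_add hA hDpd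
  have hBpos : 0 < (A + D).det.re := (Complex.lt_def.mp hBpd.det_pos).1
  have hXupper : (A + D).det.re ≤ ∏ i, d i := det_upper (A + D) hBpd.posSemidef d hd hBdiag
  have hDdetre : D.det.re = ∏ i, σ i := by
    rw [hD_def, Matrix.det_diagonal, ← Complex.ofReal_prod, Complex.ofReal_re]
  have hPSpos : (0:ℝ) < ∏ i, σ i := Finset.prod_pos fun i _ => hσ i
  have hPdpos : (0:ℝ) < ∏ i, d i := Finset.prod_pos fun i _ => hd i
  -- scalar multiples of D
  have hsmulD : ∀ c : ℝ, c • D = Matrix.diagonal (fun i => ((c * σ i : ℝ) : ℂ)) := by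
    intro c
    rw [hD_def]
    ext i j
    by_cases hij : i = j
    · subst hij
      rw [Matrix.smul_apply, Matrix.diagonal_apply_eq, Matrix.diagonal_apply_eq,
        Complex.real_smul]
      push_cast
      ring
    · rw [Matrix.smul_apply, Matrix.diagonal_apply_ne _ hij, Matrix.diagonal_apply_ne _ hij,
        smul_zero]
  -- the matrix A + (1+α)•D
  have hMdiag : ∀ (α : ℝ) i, (A + (1 + α) • D) i i = ((d i + α * σ i : ℝ) : ℂ) := by
    intro α i
    rw [hsmulD, Matrix.add_apply, Matrix.diagonal_apply_eq, hAii]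
    push_cast [hd_def]
    ring
  have hMoff : ∀ (α : ℝ) i j, i ≠ j → (A + (1 + α) • D) i j = (A + D) i j := by
    intro α i j hij
    rw [hsmulD, Matrix.add_apply, Matrix.diagonal_apply_ne _ hij, add_zero, hBoff _ _ hij]
  have hMpd : ∀ α : ℝ, 0 < α → (A + (1 + α) • D).PosDef := by
    intro α hα
    rw [hsmulD]
    exact Matrix.PosDef.posSemidef_add hA (Matrix.PosDef.diagonal fun i =>
      Complex.zero_lt_real.mpr (by nlinarith [hσ i]))
  have hMdet : ∀ α : ℝ, 0 < α → 0 < (A + (1 + α) • D).det.re ∧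
      (1 - 1/κ)^L * ∏ i, (d i + α * σ i) ≤ (A + (1 + α) • D).det.re := by
    intro α hα
    have hpd := hMpd α hα
    have hpos : 0 < (A + (1 + α) • D).det.re := (Complex.lt_def.mp hpd.det_pos).1
    have him : (A + (1 + α) • D).det.im = 0 := ((Complex.lt_def.mp hpd.det_pos).2).symm
    refine ⟨hpos, ?_⟩
    have habs : ‖(A + (1 + α) • D).det‖ = (A + (1 + α) • D).det.re := by
      have heq2 : (A + (1 + α) • D).det = (((A + (1 + α) • D).det.re : ℝ) : ℂ) := by
        apply Complex.ext
        · simp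
        · simp [him]
      conv_lhs => rw [heq2]
      rw [Complex.norm_real, Real.norm_eq_abs, abs_of_pos hpos]
    rw [← habs]
    apply det_lower κ hκ _ (fun i => d i + α * σ i)
      (fun i => add_pos (hd i) (mul_pos hα (hσ i))) (hMdiag α)
    intro i
    have hsums : ∑ j ∈ Finset.univ.erase i, ‖((A + (1 + α) • D) i j)‖
        = ∑ j ∈ Finset.univ.erase i, ‖((A + D) i j)‖ := by
      refine Finset.sum_congr rfl fun j hj => ?_
      rw [hMoff α i j (by exact fun h => (Finset.mem_erase.mp hj).1 h.symm)]
    rw [hsums]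
    have h1 := hdd' i
    have h2 : 0 ≤ α * σ i := (mul_pos hα (hσ i)).le
    linarith
  have hscaleDet : ∀ α : ℝ, ((1 + α) • D).det.re = ∏ i, ((1 + α) * σ i) := by
    intro α
    rw [hsmulD, Matrix.det_diagonal, ← Complex.ofReal_prod, Complex.ofReal_re]
  -- the backhaul sum in convenient form
  have hSform : ∀ α : ℝ, 0 < α →
      (∑ i : Fin L, Real.logb 2 (((A i i).re + (1 + α) * σ i) / (α * σ i)))
        = (∑ i, Real.logb 2 (d i + α * σ i)) - ∑ i, Real.logb 2 (α * σ i) := by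
    intro α hα
    rw [← Finset.sum_sub_distrib]
    refine Finset.sum_congr rfl fun i _ => ?_
    have h1 : (A i i).re + (1 + α) * σ i = d i + α * σ i := by
      rw [hd_def]; ring
    rw [h1, Real.logb_div (ne_of_gt (add_pos (hd i) (mul_pos hα (hσ i))))
      (ne_of_gt (mul_pos hα (hσ i)))]
  -- logb of a product
  have hlogbprod : ∀ (f : Fin L → ℝ), (∀ i, 0 < f i) →
      Real.logb 2 (∏ i, f i) = ∑ i, Real.logb 2 (f i) := by
    intro f hf
    rw [Real.logb, Real.log_prod (fun i _ => (hf i).ne'), Finset.sum_div]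
    rfl
  have hlog2 : Real.logb 2 2 = 1 := Real.logb_self_eq_one hb2
  by_cases hcase :
      (∑ i : Fin L, Real.logb 2 (((A i i).re + (1 + (1:ℝ)) * σ i) / ((1:ℝ) * σ i))) ≤ C
  case pos =>
    refine ⟨1, one_pos, hcase, ?_⟩
    obtain ⟨hYpos, hYlow⟩ := hMdet 1 one_pos
    have hZ : ((1 + (1:ℝ)) • D).det.re = ∏ i, ((1 + (1:ℝ)) * σ i) := hscaleDet 1
    have hZval : ∏ i, ((1 + (1:ℝ)) * σ i) = 2 ^ L * ∏ i, σ i := by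
      rw [Finset.prod_mul_distrib, Finset.prod_const, Finset.card_univ, Fintype.card_fin]
      norm_num
    have hdspos : (0:ℝ) < ∏ i, (d i + 1 * σ i) :=
      Finset.prod_pos fun i _ => by nlinarith [hd i, hσ i]
    have hstrict : (∏ i, d i) < ∏ i, (d i + 1 * σ i) := by
      refine Finset.prod_lt_prod_of_nonempty (fun i _ => hd i) (fun i _ => by nlinarith [hσ i]) ?_
      exact Finset.univ_nonempty_iff.mpr (Fin.pos_iff_nonempty.mp hL)
    have hXle : Real.logb 2 (A + D).det.re ≤ Real.logb 2 (∏ i, d i) :=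
      Real.logb_le_logb_of_le hb2 hBpos hXupper
    have hPdlt : Real.logb 2 (∏ i, d i) < Real.logb 2 (∏ i, (d i + 1 * σ i)) :=
      Real.logb_lt_logb hb2 hPdpos hstrict
    have hYge : -(L * Real.logb 2 (κ / (κ - 1))) + Real.logb 2 (∏ i, (d i + 1 * σ i))
        ≤ Real.logb 2 (A + (1 + (1:ℝ)) • D).det.re := by
      have h1 : Real.logb 2 ((1 - 1/κ)^L * ∏ i, (d i + 1 * σ i))
          ≤ Real.logb 2 (A + (1 + (1:ℝ)) • D).det.re :=
        Real.logb_le_logb_of_le hb2 (by positivity) hYlow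
      rw [Real.logb_mul (by positivity) (ne_of_gt hdspos), Real.logb_pow, hlogκ] at h1
      linarith
    have hmin : min (Real.logb 2 ((A + D).det.re / D.det.re)) C
        ≤ Real.logb 2 ((A + D).det.re / D.det.re) := min_le_left _ _
    have hgoal : Real.logb 2 ((A + D).det.re / D.det.re)
        - Real.logb 2 ((A + (1 + (1:ℝ)) • D).det.re / ((1 + (1:ℝ)) • D).det.re)
        < L * (1 + Real.logb 2 (κ / (κ - 1))) := by
      rw [Real.logb_div (ne_of_gt hBpos) (by rw [hDdetre]; exact ne_of_gt hPSpos),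
        Real.logb_div (ne_of_gt hYpos) (by rw [hZ]; exact ne_of_gt (by rw [hZval]; positivity)),
        hZ, hZval, hDdetre, Real.logb_mul (by positivity) (ne_of_gt hPSpos), Real.logb_pow, hlog2]
      linarith
    linarith
  case neg =>
    push_neg at hcase
    have hCL : 0 < C / (L:ℝ) := div_pos hC hLpos
    set E : ℝ := (2:ℝ) ^ (C / (L:ℝ)) with hE_def
    have hE1 : 1 < E := by
      rw [hE_def, show (1:ℝ) = (2:ℝ) ^ (0:ℝ) from (Real.rpow_zero 2).symm]
      exact (Real.rpow_lt_rpow_left_iff hb2).mpr hCL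
    have hlogE : Real.logb 2 E = C / L := Real.logb_rpow (by norm_num) (by norm_num)
    set M0 : ℝ := 1 + ∑ i, d i / (σ i * (E - 1)) with hM0_def
    have hterm_pos : ∀ i, 0 < d i / (σ i * (E - 1)) := fun i =>
      div_pos (hd i) (mul_pos (hσ i) (by linarith))
    have hM0ge1 : 1 ≤ M0 := by
      have h0 : 0 ≤ ∑ i, d i / (σ i * (E - 1)) :=
        Finset.sum_nonneg fun i _ => (hterm_pos i).le
      rw [hM0_def]
      linarith
    have hM0i : ∀ i, d i / (σ i * (E - 1)) ≤ M0 := by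
      intro i
      have h1 : d i / (σ i * (E - 1)) ≤ ∑ j, d j / (σ j * (E - 1)) :=
        Finset.single_le_sum (fun j _ => (hterm_pos j).le) (Finset.mem_univ i)
      rw [hM0_def]
      linarith
    set h : ℝ → ℝ :=
      fun α => (∑ i, (Real.log (d i + α * σ i) - Real.log (α * σ i))) / Real.log 2 with hh_def
    have hhS : ∀ α : ℝ, 0 < α →
        (∑ i : Fin L, Real.logb 2 (((A i i).re + (1 + α) * σ i) / (α * σ i))) = h α := by
      intro α hα
      rw [hSform α hα, hh_def]
      simp only [Real.logb]
      rw [← Finset.sum_div, ← Finset.sum_div, ← sub_div, ← Finset.sum_sub_distrib]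
    have hcont : ContinuousOn h (Set.Icc 1 M0) := by
      rw [hh_def]
      apply ContinuousOn.div_const
      apply continuousOn_finset_sum
      intro i _
      have hpos1 : ∀ x ∈ Set.Icc (1:ℝ) M0, 0 < d i + x * σ i := by
        intro x hx
        have : (1:ℝ) ≤ x := hx.1
        nlinarith [hd i, hσ i]
      have hpos2 : ∀ x ∈ Set.Icc (1:ℝ) M0, 0 < x * σ i := by
        intro x hx
        have : (1:ℝ) ≤ x := hx.1
        nlinarith [hσ i]
      apply ContinuousOn.sub
      · exact ContinuousOn.log
          (continuousOn_const.add (continuousOn_id.mul continuousOn_const))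
          (fun x hx => (hpos1 x hx).ne')
      · exact ContinuousOn.log (continuousOn_id.mul continuousOn_const)
          (fun x hx => (hpos2 x hx).ne')
    have hh1 : C < h 1 := by
      rw [← hhS 1 one_pos]
      exact hcase
    have hhM0 : h M0 ≤ C := by
      have hM0pos : (0:ℝ) < M0 := by linarith
      rw [← hhS M0 hM0pos]
      have hstep : ∀ i : Fin L,
          Real.logb 2 (((A i i).re + (1 + M0) * σ i) / (M0 * σ i)) ≤ C / L := by
        intro i
        have hden : 0 < M0 * σ i := mul_pos hM0pos (hσ i)
        have hnum : (A i i).re + (1 + M0) * σ i = d i + M0 * σ i := by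
          rw [hd_def]; ring
        have hratio : (d i + M0 * σ i) / (M0 * σ i) ≤ E := by
          rw [div_le_iff₀ hden]
          have h1 : d i ≤ M0 * (σ i * (E - 1)) :=
            (div_le_iff₀ (mul_pos (hσ i) (by linarith))).mp (hM0i i)
          nlinarith
        rw [hnum]
        calc Real.logb 2 ((d i + M0 * σ i) / (M0 * σ i)) ≤ Real.logb 2 E :=
          Real.logb_le_logb_of_le hb2 (div_pos (add_pos (hd i) (mul_pos hM0pos (hσ i))) hden) hratio
        _ = C / L := hlogE
      calc (∑ i : Fin L, Real.logb 2 (((A i i).re + (1 + M0) * σ i) / (M0 * σ i)))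
          ≤ ∑ _i : Fin L, C / L := Finset.sum_le_sum fun i _ => hstep i
        _ = L * (C / L) := by rw [Finset.sum_const, Finset.card_univ, Fintype.card_fin]; ring
        _ = C := by field_simp
    have hIVT := intermediate_value_Icc' hM0ge1 hcont
    obtain ⟨α, hαmem, hαval⟩ := hIVT ⟨hhM0, hh1.le⟩
    have hα1 : 1 < α := by
      rcases lt_or_eq_of_le hαmem.1 with h1 | h1
      · exact h1
      · exfalso
        rw [← h1] at hαval
        rw [hαval] at hh1
        exact lt_irrefl _ hh1
    have hαpos : (0:ℝ) < α := by linarith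
    refine ⟨α, hαpos, ?_, ?_⟩
    · rw [hhS α hαpos, hαval]
    · -- gap bound
      obtain ⟨hYpos, hYlow⟩ := hMdet α hαpos
      have hZ : ((1 + α) • D).det.re = ∏ i, ((1 + α) * σ i) := hscaleDet α
      have hZpos : (0:ℝ) < ∏ i, ((1 + α) * σ i) :=
        Finset.prod_pos fun i _ => mul_pos (by linarith) (hσ i)
      have hdspos : (0:ℝ) < ∏ i, (d i + α * σ i) :=
        Finset.prod_pos fun i _ => add_pos (hd i) (mul_pos hαpos (hσ i))
      -- rate lower bound
      have hYge : -(L * Real.logb 2 (κ / (κ - 1))) + ∑ i, Real.logb 2 (d i + α * σ i)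
          ≤ Real.logb 2 (A + (1 + α) • D).det.re := by
        have h1 : Real.logb 2 ((1 - 1/κ)^L * ∏ i, (d i + α * σ i))
            ≤ Real.logb 2 (A + (1 + α) • D).det.re :=
          Real.logb_le_logb_of_le hb2 (by positivity) hYlow
        rw [Real.logb_mul (by positivity) (ne_of_gt hdspos), Real.logb_pow, hlogκ,
          hlogbprod _ (fun i => add_pos (hd i) (mul_pos hαpos (hσ i)))] at h1
        linarith
      have hZlog : Real.logb 2 (∏ i, ((1 + α) * σ i))
          = L * Real.logb 2 (1 + α) + ∑ i, Real.logb 2 (σ i) := by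
        rw [hlogbprod _ (fun i => mul_pos (by linarith) (hσ i))]
        have : ∀ i : Fin L, Real.logb 2 ((1 + α) * σ i)
            = Real.logb 2 (1 + α) + Real.logb 2 (σ i) := fun i =>
          Real.logb_mul (by linarith) (ne_of_gt (hσ i))
        rw [Finset.sum_congr rfl fun i _ => this i, Finset.sum_add_distrib,
          Finset.sum_const, Finset.card_univ, Fintype.card_fin, nsmul_eq_mul]
      have hSα : h α = ∑ i, Real.logb 2 (d i + α * σ i)
          - (L * Real.logb 2 α + ∑ i, Real.logb 2 (σ i)) := by
        rw [← hhS α hαpos, hSform α hαpos]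
        have : ∀ i : Fin L, Real.logb 2 (α * σ i)
            = Real.logb 2 α + Real.logb 2 (σ i) := fun i =>
          Real.logb_mul (ne_of_gt hαpos) (ne_of_gt (hσ i))
        rw [Finset.sum_congr rfl fun i _ => this i, Finset.sum_add_distrib,
          Finset.sum_const, Finset.card_univ, Fintype.card_fin, nsmul_eq_mul]
      -- logb (1+α) - logb α < 1
      have hfrac : Real.logb 2 (1 + α) - Real.logb 2 α < 1 := by
        have h1 : Real.logb 2 (1 + α) < Real.logb 2 (2 * α) :=
          Real.logb_lt_logb hb2 (by linarith) (by linarith)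
        rw [Real.logb_mul (by norm_num) (ne_of_gt hαpos), hlog2] at h1
        linarith
      have hmin : min (Real.logb 2 ((A + D).det.re / D.det.re)) C ≤ C := min_le_right _ _
      have hRlow : Real.logb 2 ((A + (1 + α) • D).det.re / ((1 + α) • D).det.re)
          = Real.logb 2 (A + (1 + α) • D).det.re - Real.logb 2 (∏ i, ((1 + α) * σ i)) := by
        rw [Real.logb_div (ne_of_gt hYpos) (by rw [hZ]; exact ne_of_gt hZpos), hZ]
      have hmul : L * (Real.logb 2 (1 + α) - Real.logb 2 α) < L * 1 :=
        (mul_lt_mul_iff_right₀ hLpos).mpr hfrac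
      have hCexp : C = ∑ i, Real.logb 2 (d i + α * σ i)
          - ((L:ℝ) * Real.logb 2 α + ∑ i, Real.logb 2 (σ i)) := by
        rw [← hαval, hSα]
      rw [hRlow, hZlog]
      linarith [hmin, hYge, hmul]
end

section
/- Let S ∈ ℂ^{L×L} be a fixed Hermitian positive semidefinite matrix. Then the function f : (0,∞)^L → ℝ defined by f(q₁,…,q_L) = log₂ det( S + diag(q₁,…,q_L) ) − ∑_{i=1}^L log₂ qᵢ is convex on the convex set (0,∞)^L. (Note S + diag(q) is Hermitian positive definite for q ∈ (0,∞)^L, so its determinant is a positive real.) -/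
open scoped ComplexOrder

open Finset

namespace Stmt13Aux

variable {L : ℕ}

/-- Principal submatrix of `S` on the complement of `s`. -/
noncomputable def minor (S : Matrix (Fin L) (Fin L) ℂ) (s : Finset (Fin L)) :
    Matrix {i : Fin L // i ∉ s} {i : Fin L // i ∉ s} ℂ :=
  S.submatrix Subtype.val Subtype.val

lemma det_piecewise_one (S : Matrix (Fin L) (Fin L) ℂ) (s : Finset (Fin L)) :
    Matrix.det (Matrix.of (s.piecewise (1 : Matrix (Fin L) (Fin L) ℂ) S)) = (minor S s).det := by
  classical
  let e : {i : Fin L // i ∈ s} ⊕ {i : Fin L // i ∉ s} ≃ Fin L := Equiv.sumCompl (· ∈ s)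
  rw [← Matrix.det_submatrix_equiv_self e]
  have hM : (Matrix.of (s.piecewise (1 : Matrix (Fin L) (Fin L) ℂ) S)).submatrix e e =
      Matrix.fromBlocks 1 0
        ((S.submatrix Subtype.val Subtype.val : Matrix {i : Fin L // i ∉ s} {i : Fin L // i ∈ s} ℂ))
        (minor S s) := by
    ext i j
    cases i with
    | inl i =>
      cases j with
      | inl j =>
        simp [e, Finset.piecewise, i.2, Matrix.one_apply]
      | inr j =>
        have hij : (i : Fin L) ≠ (j : Fin L) := fun h => j.2 (h ▸ i.2)
        simp [e, Finset.piecewise, i.2, Matrix.one_apply, hij]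
    | inr i =>
      cases j with
      | inl j => simp [e, Finset.piecewise, i.2, minor]
      | inr j => simp [e, Finset.piecewise, i.2, minor]
  rw [hM, Matrix.det_fromBlocks_zero₁₂, Matrix.det_one, one_mul]

lemma det_add_diagonal (S : Matrix (Fin L) (Fin L) ℂ) (d : Fin L → ℂ) :
    (S + Matrix.diagonal d).det =
      ∑ s : Finset (Fin L), (∏ i ∈ s, d i) * (minor S s).det := by
  classical
  have key : (S + Matrix.diagonal d).det =
      ∑ s : Finset (Fin L),
        Matrix.detRowAlternating (s.piecewise (Matrix.diagonal d) S) := by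
    rw [add_comm]
    exact Matrix.detRowAlternating.toMultilinearMap.map_add_univ (Matrix.diagonal d) S
  rw [key]
  refine Finset.sum_congr rfl fun s _ => ?_
  have h1 : s.piecewise (Matrix.diagonal d) S =
      s.piecewise (fun i => d i • (s.piecewise (1 : Matrix (Fin L) (Fin L) ℂ) S) i)
        (s.piecewise (1 : Matrix (Fin L) (Fin L) ℂ) S) := by
    funext i j
    by_cases hi : i ∈ s <;>
      simp [Finset.piecewise, hi, Matrix.diagonal_apply, Matrix.one_apply, mul_ite]
  rw [h1]
  have h2 := Matrix.detRowAlternating.toMultilinearMap.map_piecewise_smul d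
    (s.piecewise (1 : Matrix (Fin L) (Fin L) ℂ) S) s
  refine h2.trans ?_
  rw [smul_eq_mul]
  congr 1
  exact det_piecewise_one S s

lemma minor_det_real {S : Matrix (Fin L) (Fin L) ℂ} (hS : S.PosSemidef) (s : Finset (Fin L)) :
    (minor S s).det = (((minor S s).det.re : ℝ) : ℂ) ∧ 0 ≤ (minor S s).det.re := by
  have hP : (minor S s).PosSemidef := hS.submatrix _
  have h := hP.isHermitian.det_eq_prod_eigenvalues
  have h2 : (minor S s).det = ((∏ i, hP.isHermitian.eigenvalues i : ℝ) : ℂ) := by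
    rw [h]; push_cast; rfl
  constructor
  · rw [h2, Complex.ofReal_re]
  · rw [h2, Complex.ofReal_re]
    exact Finset.prod_nonneg fun i _ => hP.eigenvalues_nonneg i

lemma minor_univ_det (S : Matrix (Fin L) (Fin L) ℂ) :
    (minor S (Finset.univ : Finset (Fin L))).det = 1 := by
  haveI : IsEmpty {i : Fin L // i ∉ (Finset.univ : Finset (Fin L))} :=
    ⟨fun x => x.2 (Finset.mem_univ _)⟩
  exact Matrix.det_isEmpty

/-- The nonnegative coefficients in the expansion of `det (S + diag q)`. -/
noncomputable def coeff (S : Matrix (Fin L) (Fin L) ℂ) (s : Finset (Fin L)) : ℝ :=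
  (minor S s).det.re

/-- The function `g q = det (S + diag q) / ∏ q` written as a sum of reciprocal products. -/
noncomputable def gfun (S : Matrix (Fin L) (Fin L) ℂ) (q : Fin L → ℝ) : ℝ :=
  ∑ s : Finset (Fin L), coeff S s * ∏ i ∈ sᶜ, (q i)⁻¹

lemma coeff_nonneg {S : Matrix (Fin L) (Fin L) ℂ} (hS : S.PosSemidef) (s : Finset (Fin L)) :
    0 ≤ coeff S s := (minor_det_real hS s).2

lemma coeff_univ (S : Matrix (Fin L) (Fin L) ℂ) : coeff S Finset.univ = 1 := by
  rw [coeff, minor_univ_det]; rfl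

lemma det_re_eq {S : Matrix (Fin L) (Fin L) ℂ} (hS : S.PosSemidef) (q : Fin L → ℝ) :
    (S + Matrix.diagonal fun i => (q i : ℂ)).det.re
      = ∑ s : Finset (Fin L), (∏ i ∈ s, q i) * coeff S s := by
  rw [det_add_diagonal, Complex.re_sum]
  refine Finset.sum_congr rfl fun s _ => ?_
  have h1 : (∏ i ∈ s, ((q i : ℝ) : ℂ)) = ((∏ i ∈ s, q i : ℝ) : ℂ) := by push_cast; rfl
  rw [h1, (minor_det_real hS s).1, ← Complex.ofReal_mul, Complex.ofReal_re]; rfl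

lemma gfun_pos {S : Matrix (Fin L) (Fin L) ℂ} (hS : S.PosSemidef) {q : Fin L → ℝ}
    (hq : ∀ i, 0 < q i) : 0 < gfun S q := by
  have h1 : (1 : ℝ) ≤ gfun S q := by
    have h := Finset.single_le_sum
      (f := fun s : Finset (Fin L) => coeff S s * ∏ i ∈ sᶜ, (q i)⁻¹)
      (fun s _ => mul_nonneg (coeff_nonneg hS s)
        (Finset.prod_nonneg fun i _ => inv_nonneg.mpr (hq i).le))
      (Finset.mem_univ (Finset.univ : Finset (Fin L)))
    refine le_trans (le_of_eq ?_) h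
    simp only [coeff_univ, Finset.compl_univ, Finset.prod_empty, mul_one]
  linarith

lemma f_eq {S : Matrix (Fin L) (Fin L) ℂ} (hS : S.PosSemidef) {q : Fin L → ℝ}
    (hq : ∀ i, 0 < q i) :
    Real.logb 2 ((S + Matrix.diagonal fun i => (q i : ℂ)).det.re) -
      ∑ i : Fin L, Real.logb 2 (q i) = Real.logb 2 (gfun S q) := by
  have hmain : (S + Matrix.diagonal fun i => (q i : ℂ)).det.re = (∏ i, q i) * gfun S q := by
    rw [det_re_eq hS, gfun, Finset.mul_sum]
    refine Finset.sum_congr rfl fun s _ => ?_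
    have hc : (∏ i ∈ sᶜ, q i) * ∏ i ∈ sᶜ, (q i)⁻¹ = 1 := by
      rw [← Finset.prod_mul_distrib]
      exact Finset.prod_eq_one fun i _ => mul_inv_cancel₀ (hq i).ne'
    symm
    calc (∏ i, q i) * (coeff S s * ∏ i ∈ sᶜ, (q i)⁻¹)
        = ((∏ i ∈ s, q i) * ∏ i ∈ sᶜ, q i) * (coeff S s * ∏ i ∈ sᶜ, (q i)⁻¹) := by
          rw [Finset.prod_mul_prod_compl]
      _ = ((∏ i ∈ s, q i) * coeff S s) * ((∏ i ∈ sᶜ, q i) * ∏ i ∈ sᶜ, (q i)⁻¹) := by ring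
      _ = (∏ i ∈ s, q i) * coeff S s := by rw [hc, mul_one]
  have hprod_pos : 0 < ∏ i, q i := Finset.prod_pos fun i _ => hq i
  rw [hmain, Real.logb_mul hprod_pos.ne' (gfun_pos hS hq).ne',
    Real.logb_prod _ _ fun i _ => (hq i).ne']
  ring

end Stmt13Aux

open Stmt13Aux

/-- For a fixed Hermitian positive semidefinite `S`, the backhaul-constraint function
`q ↦ log₂ det(S + diag(q)) − ∑ᵢ log₂ qᵢ` is convex on the positive orthant `(0,∞)^L`. -/
theorem stmt_13 {L : ℕ} (S : Matrix (Fin L) (Fin L) ℂ) (hS : S.PosSemidef) :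
    ConvexOn ℝ {q : Fin L → ℝ | ∀ i, 0 < q i}
      (fun q =>
        Real.logb 2 ((S + Matrix.diagonal fun i => (q i : ℂ)).det.re) -
          ∑ i : Fin L, Real.logb 2 (q i)) := by
  classical
  constructor
  · intro x hx y hy a b ha hb hab i
    have := (convex_Ioi (0 : ℝ)) (hx i) (hy i) ha hb hab
    simpa using this
  · intro x hx y hy a b ha hb hab
    rcases eq_or_lt_of_le ha with rfl | ha'
    · have hb1 : b = 1 := by linarith
      subst hb1
      simp
    rcases eq_or_lt_of_le hb with rfl | hb'
    · have ha1 : a = 1 := by linarith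
      subst ha1
      simp
    have hx' : ∀ i, 0 < x i := hx
    have hy' : ∀ i, 0 < y i := hy
    set z : Fin L → ℝ := a • x + b • y with hzdef
    have hz : ∀ i, 0 < z i := by
      intro i
      have hzi : z i = a * x i + b * y i := by simp [hzdef, smul_eq_mul]
      rw [hzi]
      have := (convex_Ioi (0 : ℝ)) (hx i) (hy i) ha hb hab
      simpa [smul_eq_mul] using this
    show Real.logb 2 ((S + Matrix.diagonal fun i => (z i : ℂ)).det.re) -
          ∑ i : Fin L, Real.logb 2 (z i) ≤
        a • (Real.logb 2 ((S + Matrix.diagonal fun i => (x i : ℂ)).det.re) -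
          ∑ i : Fin L, Real.logb 2 (x i)) +
        b • (Real.logb 2 ((S + Matrix.diagonal fun i => (y i : ℂ)).det.re) -
          ∑ i : Fin L, Real.logb 2 (y i))
    rw [f_eq hS hz, f_eq hS hx', f_eq hS hy', smul_eq_mul, smul_eq_mul]
    -- key inequality : g z ≤ (g x)^a * (g y)^b
    have key : gfun S z ≤ (gfun S x) ^ a * (gfun S y) ^ b := by
      have term : ∀ s : Finset (Fin L),
          coeff S s * ∏ i ∈ sᶜ, (z i)⁻¹ ≤
            (coeff S s * ∏ i ∈ sᶜ, (x i)⁻¹) ^ a * (coeff S s * ∏ i ∈ sᶜ, (y i)⁻¹) ^ b := by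
        intro s
        have hpx : 0 ≤ ∏ i ∈ sᶜ, (x i)⁻¹ :=
          Finset.prod_nonneg fun i _ => inv_nonneg.mpr (hx' i).le
        have hpy : 0 ≤ ∏ i ∈ sᶜ, (y i)⁻¹ :=
          Finset.prod_nonneg fun i _ => inv_nonneg.mpr (hy' i).le
        have hrs : coeff S s ^ a * coeff S s ^ b = coeff S s := by
          rw [← Real.rpow_add' (coeff_nonneg hS s) (by rw [hab]; norm_num), hab, Real.rpow_one]
        have hprod : ∏ i ∈ sᶜ, (z i)⁻¹ ≤
            (∏ i ∈ sᶜ, (x i)⁻¹) ^ a * (∏ i ∈ sᶜ, (y i)⁻¹) ^ b := by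
          have per : ∀ i ∈ sᶜ, (z i)⁻¹ ≤ ((x i)⁻¹) ^ a * ((y i)⁻¹) ^ b := by
            intro i _
            have hgm : x i ^ a * y i ^ b ≤ a * x i + b * y i :=
              Real.geom_mean_le_arith_mean2_weighted ha hb (hx' i).le (hy' i).le hab
            have hgm_pos : 0 < x i ^ a * y i ^ b :=
              mul_pos (Real.rpow_pos_of_pos (hx' i) a) (Real.rpow_pos_of_pos (hy' i) b)
            have hzi : z i = a * x i + b * y i := by simp [hzdef, smul_eq_mul]
            have h2 : (z i)⁻¹ ≤ (x i ^ a * y i ^ b)⁻¹ := by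
              rw [hzi]
              exact inv_anti₀ hgm_pos hgm
            calc (z i)⁻¹ ≤ (x i ^ a * y i ^ b)⁻¹ := h2
              _ = ((x i)⁻¹) ^ a * ((y i)⁻¹) ^ b := by
                  rw [mul_inv, ← Real.inv_rpow (hx' i).le, ← Real.inv_rpow (hy' i).le]
          calc ∏ i ∈ sᶜ, (z i)⁻¹ ≤ ∏ i ∈ sᶜ, ((x i)⁻¹) ^ a * ((y i)⁻¹) ^ b :=
                Finset.prod_le_prod (fun i _ => inv_nonneg.mpr (hz i).le) per
            _ = (∏ i ∈ sᶜ, (x i)⁻¹) ^ a * (∏ i ∈ sᶜ, (y i)⁻¹) ^ b := by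
                rw [Finset.prod_mul_distrib,
                  Real.finset_prod_rpow _ _ (fun i _ => inv_nonneg.mpr (hx' i).le),
                  Real.finset_prod_rpow _ _ (fun i _ => inv_nonneg.mpr (hy' i).le)]
        calc coeff S s * ∏ i ∈ sᶜ, (z i)⁻¹
            ≤ coeff S s * ((∏ i ∈ sᶜ, (x i)⁻¹) ^ a * (∏ i ∈ sᶜ, (y i)⁻¹) ^ b) :=
              mul_le_mul_of_nonneg_left hprod (coeff_nonneg hS s)
          _ = (coeff S s ^ a * coeff S s ^ b) *
                ((∏ i ∈ sᶜ, (x i)⁻¹) ^ a * (∏ i ∈ sᶜ, (y i)⁻¹) ^ b) := by rw [hrs]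
          _ = (coeff S s * ∏ i ∈ sᶜ, (x i)⁻¹) ^ a * (coeff S s * ∏ i ∈ sᶜ, (y i)⁻¹) ^ b := by
              rw [Real.mul_rpow (coeff_nonneg hS s) hpx, Real.mul_rpow (coeff_nonneg hS s) hpy]
              ring
      have hpq : Real.HolderConjugate a⁻¹ b⁻¹ := by
        constructor
        · rw [inv_inv, inv_inv, inv_one]; exact hab
        · exact inv_pos.mpr ha'
        · exact inv_pos.mpr hb'
      have hoelder := Real.inner_le_Lp_mul_Lq_of_nonneg (s := Finset.univ) hpq
        (f := fun s : Finset (Fin L) => (coeff S s * ∏ i ∈ sᶜ, (x i)⁻¹) ^ a)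
        (g := fun s : Finset (Fin L) => (coeff S s * ∏ i ∈ sᶜ, (y i)⁻¹) ^ b)
        (fun s _ => Real.rpow_nonneg (mul_nonneg (coeff_nonneg hS s)
          (Finset.prod_nonneg fun i _ => inv_nonneg.mpr (hx' i).le)) a)
        (fun s _ => Real.rpow_nonneg (mul_nonneg (coeff_nonneg hS s)
          (Finset.prod_nonneg fun i _ => inv_nonneg.mpr (hy' i).le)) b)
      have hsimp : ∀ (w : Fin L → ℝ) (c : ℝ), 0 < c → (∀ i, 0 < w i) →
          (∑ s : Finset (Fin L), ((coeff S s * ∏ i ∈ sᶜ, (w i)⁻¹) ^ c) ^ c⁻¹) ^ (1 / c⁻¹)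
            = (∑ s : Finset (Fin L), coeff S s * ∏ i ∈ sᶜ, (w i)⁻¹) ^ c := by
        intro w c hc hw
        rw [one_div, inv_inv]
        congr 1
        refine Finset.sum_congr rfl fun s _ => ?_
        exact Real.rpow_rpow_inv (mul_nonneg (coeff_nonneg hS s)
          (Finset.prod_nonneg fun i _ => inv_nonneg.mpr (hw i).le)) hc.ne'
      rw [hsimp x a ha' hx', hsimp y b hb' hy'] at hoelder
      calc gfun S z ≤ ∑ s : Finset (Fin L),
            (coeff S s * ∏ i ∈ sᶜ, (x i)⁻¹) ^ a * (coeff S s * ∏ i ∈ sᶜ, (y i)⁻¹) ^ b :=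
            Finset.sum_le_sum fun s _ => term s
        _ ≤ (gfun S x) ^ a * (gfun S y) ^ b := hoelder
    have hgz : 0 < gfun S z := gfun_pos hS hz
    have hgx : 0 < gfun S x := gfun_pos hS hx'
    have hgy : 0 < gfun S y := gfun_pos hS hy'
    calc Real.logb 2 (gfun S z) ≤ Real.logb 2 ((gfun S x) ^ a * (gfun S y) ^ b) :=
          Real.logb_le_logb_of_le one_lt_two hgz key
      _ = a * Real.logb 2 (gfun S x) + b * Real.logb 2 (gfun S y) := by
          rw [Real.logb_mul (Real.rpow_pos_of_pos hgx a).ne' (Real.rpow_pos_of_pos hgy b).ne',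
            Real.logb_rpow_eq_mul_logb_of_pos hgx, Real.logb_rpow_eq_mul_logb_of_pos hgy]
end
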